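/- arXiv:1503.04512 — 2 statements merged into one kernel-verified Lean document; each statement's English description precedes it below -/
import Mathlib

section
/- Let p, q, s and φ be as in the definition of the variable Besov-type space, with p₊ < ∞ and q₊ < ∞. Then the following embeddings hold: B^{s(·),φ}_{p(·),min{p(·),q(·)}}(ℝⁿ) ↪ F^{s(·),φ}_{p(·),q(·)}(ℝⁿ) ↪ B^{s(·),φ}_{p(·),max{p(·),q(·)}}(ℝⁿ). In particular, if p₊ < ∞ then B^{s(·),φ}_{p(·),p(·)}(ℝⁿ) = F^{s(·),φ}_{p(·),p(·)}(ℝⁿ) with equivalent quasi-norms. -/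
open MeasureTheory Real FourierTransform
open scoped ENNReal BigOperators Classical

noncomputable section

/-- The dyadic cube `Q_{jk} = 2^{−j}([0,1)ⁿ + k)` in `ℝⁿ`. -/
def dyadicCube {n : ℕ} (j : ℤ) (k : Fin n → ℤ) : Set (EuclideanSpace ℝ (Fin n)) :=
  {x | ∀ i, (2 : ℝ) ^ (-j) * (k i : ℝ) ≤ x i ∧ x i < (2 : ℝ) ^ (-j) * ((k i : ℝ) + 1)}

/-- The lower-left corner `2^{−j} k` of the dyadic cube `Q_{jk}`. -/
def dyadicCorner {n : ℕ} (j : ℤ) (k : Fin n → ℤ) : EuclideanSpace ℝ (Fin n) :=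
  WithLp.toLp 2 (fun i => (2 : ℝ) ^ (-j) * (k i : ℝ))

/-- The variable-exponent modular (real-valued exponent, `ℝ≥0∞`-valued function). -/
def varModularR {n : ℕ} (p : EuclideanSpace ℝ (Fin n) → ℝ)
    (f : EuclideanSpace ℝ (Fin n) → ℝ≥0∞) : ℝ≥0∞ :=
  ∫⁻ x, f x ^ p x

/-- The variable-exponent Lebesgue (Luxemburg) quasi-norm. -/
def varNormR {n : ℕ} (p : EuclideanSpace ℝ (Fin n) → ℝ)
    (f : EuclideanSpace ℝ (Fin n) → ℝ≥0∞) : ℝ≥0∞ :=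
  sInf {lam : ℝ≥0∞ | 0 < lam ∧ varModularR p (fun x => f x / lam) ≤ 1}

/-- The inner infimum of the mixed Lebesgue-sequence semimodular. -/
def mixedInnerR {n : ℕ} (p q : EuclideanSpace ℝ (Fin n) → ℝ)
    (g : EuclideanSpace ℝ (Fin n) → ℝ≥0∞) : ℝ≥0∞ :=
  sInf {mu : ℝ≥0∞ | 0 < mu ∧
    varModularR p (fun x => g x / mu ^ (1 / q x)) ≤ 1}

/-- The mixed Lebesgue-sequence semimodular `ϱ_{ℓ^{q(·)}(L^{p(·)})}`. -/
def mixedModularR {n : ℕ} (p q : EuclideanSpace ℝ (Fin n) → ℝ)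
    (g : ℕ → EuclideanSpace ℝ (Fin n) → ℝ≥0∞) : ℝ≥0∞ :=
  ∑' v, mixedInnerR p q (g v)

/-- The mixed Lebesgue-sequence quasi-norm `‖·‖_{ℓ^{q(·)}(L^{p(·)})}`. -/
def mixedNormR {n : ℕ} (p q : EuclideanSpace ℝ (Fin n) → ℝ)
    (g : ℕ → EuclideanSpace ℝ (Fin n) → ℝ≥0∞) : ℝ≥0∞ :=
  sInf {lam : ℝ≥0∞ | 0 < lam ∧ mixedModularR p q (fun v x => g v x / lam) ≤ 1}

/-- Local log-Hölder continuity with constant `C`. -/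
def LocLogHolderWith {n : ℕ} (C : ℝ) (g : EuclideanSpace ℝ (Fin n) → ℝ) : Prop :=
  ∀ x y : EuclideanSpace ℝ (Fin n), x ≠ y →
    |g x - g y| ≤ C / Real.log (Real.exp 1 + 1 / dist x y)

/-- Global log-Hölder continuity. -/
def GlobLogHolder {n : ℕ} (g : EuclideanSpace ℝ (Fin n) → ℝ) : Prop :=
  (∃ C : ℝ, 0 < C ∧ LocLogHolderWith C g) ∧
    ∃ Cinf : ℝ, 0 < Cinf ∧ ∃ ginf : ℝ,
      ∀ x : EuclideanSpace ℝ (Fin n), |g x - ginf| ≤ Cinf / Real.log (Real.exp 1 + ‖x‖)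

/-- `φ ∈ 𝒢(ℝⁿ×[0,∞))`: positivity, doubling (constant `c₁`) and compatibility
(constant `c₂`). -/
def IsGWeight {n : ℕ} (φ : EuclideanSpace ℝ (Fin n) → ℝ → ℝ) (c₁ c₂ : ℝ) : Prop :=
  1 ≤ c₁ ∧ 1 ≤ c₂ ∧ (∀ x r, 0 < r → 0 < φ x r) ∧
    (∀ x r, 0 < r → c₁⁻¹ * φ x (2 * r) ≤ φ x r ∧ φ x r ≤ c₁ * φ x (2 * r)) ∧
    (∀ x y : EuclideanSpace ℝ (Fin n), ∀ r, 0 < r → dist x y ≤ r →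
      c₂⁻¹ * φ y r ≤ φ x r ∧ φ x r ≤ c₂ * φ y r)

/-- The value `φ(P)` of a weight on the dyadic cube `P = Q_{JK}`. -/
def weightOn {n : ℕ} (φ : EuclideanSpace ℝ (Fin n) → ℝ → ℝ)
    (J : ℤ) (K : Fin n → ℤ) : ℝ :=
  φ (dyadicCorner J K) ((2 : ℝ) ^ (-J))

/-- The `j`-th level function of the sequence space `b^{s(·),φ}_{p(·),q(·)}`
localized to the dyadic cube `P = Q_{JK}`: `Σ_{Q ⊂ P, ℓ(Q)=2^{−ℓ}}
|Q|^{−s(·)/n} |t_Q| |Q|^{−1/2} χ_Q = Σ 2^{ℓ(s(·)+n/2)} |t_Q| χ_Q`. -/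
def seqLevelFn {n : ℕ} (s : EuclideanSpace ℝ (Fin n) → ℝ)
    (t : ℕ → (Fin n → ℤ) → ℝ≥0∞) (J : ℤ) (K : Fin n → ℤ) (ℓ : ℕ) :
    EuclideanSpace ℝ (Fin n) → ℝ≥0∞ :=
  Set.indicator (dyadicCube J K) (fun x =>
    ∑' k : Fin n → ℤ,
      if x ∈ dyadicCube (ℓ : ℤ) k ∧ dyadicCube (ℓ : ℤ) k ⊆ dyadicCube J K then
        ENNReal.ofReal ((2 : ℝ) ^ ((ℓ : ℝ) * (s x + n / 2))) * t ℓ k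
      else 0)

/-- The norm of the Besov-type sequence space `b^{s(·),φ}_{p(·),q(·)}(ℝⁿ)`:
sequences are indexed by dyadic cubes of side length `≤ 1`, encoded as pairs
`(ℓ, k)` with level `ℓ ∈ ℕ` (side length `2^{−ℓ}`) and corner `k ∈ ℤⁿ`. -/
def seqBesovNorm {n : ℕ} (p q s : EuclideanSpace ℝ (Fin n) → ℝ)
    (φ : EuclideanSpace ℝ (Fin n) → ℝ → ℝ)
    (t : ℕ → (Fin n → ℤ) → ℝ≥0∞) : ℝ≥0∞ :=
  ⨆ (J : ℤ) (K : Fin n → ℤ),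
    (ENNReal.ofReal (weightOn φ J K))⁻¹ *
      mixedNormR p q (fun m => seqLevelFn s t J K ((max J 0).toNat + m))

/-- The norm of the Besov-type sequence space `b^{s(·),φ}_{p(·),∞}(ℝⁿ)`. -/
def seqBesovNormInf {n : ℕ} (p s : EuclideanSpace ℝ (Fin n) → ℝ)
    (φ : EuclideanSpace ℝ (Fin n) → ℝ → ℝ)
    (t : ℕ → (Fin n → ℤ) → ℝ≥0∞) : ℝ≥0∞ :=
  ⨆ (J : ℤ) (K : Fin n → ℤ),
    (ENNReal.ofReal (weightOn φ J K))⁻¹ *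
      ⨆ m : ℕ, varNormR p (seqLevelFn s t J K ((max J 0).toNat + m))

/-- An admissible pair `(φ, Φ)` of Schwartz functions in the sense of Frazier–Jawerth:
`supp φ̂ ⊂ {1/2 ≤ |ξ| ≤ 2}` with `|φ̂(ξ)| ≥ c > 0` on `{3/5 ≤ |ξ| ≤ 5/3}`, and
`supp Φ̂ ⊂ {|ξ| ≤ 2}` with `|Φ̂(ξ)| ≥ c > 0` on `{|ξ| ≤ 5/3}`. -/
def AdmissiblePair {n : ℕ} (φ₀ Φ : SchwartzMap (EuclideanSpace ℝ (Fin n)) ℂ) : Prop :=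
  ∃ c : ℝ, 0 < c ∧
    (∀ ξ : EuclideanSpace ℝ (Fin n), 𝓕 (⇑φ₀) ξ ≠ 0 → 1 / 2 ≤ ‖ξ‖ ∧ ‖ξ‖ ≤ 2) ∧
    (∀ ξ : EuclideanSpace ℝ (Fin n), 3 / 5 ≤ ‖ξ‖ → ‖ξ‖ ≤ 5 / 3 → c ≤ ‖𝓕 (⇑φ₀) ξ‖) ∧
    (∀ ξ : EuclideanSpace ℝ (Fin n), 𝓕 (⇑Φ) ξ ≠ 0 → ‖ξ‖ ≤ 2) ∧
    (∀ ξ : EuclideanSpace ℝ (Fin n), ‖ξ‖ ≤ 5 / 3 → c ≤ ‖𝓕 (⇑Φ) ξ‖)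

/-- The Littlewood–Paley family: `φ_0 = Φ` and `φ_ℓ(x) = 2^{ℓn} φ(2^ℓ x)` for `ℓ ≥ 1`. -/
def lpFamily {n : ℕ} (φ₀ Φ : SchwartzMap (EuclideanSpace ℝ (Fin n)) ℂ) (ℓ : ℕ) :
    EuclideanSpace ℝ (Fin n) → ℂ :=
  fun x => if ℓ = 0 then Φ x else (2 : ℂ) ^ (ℓ * n) * φ₀ ((2 : ℝ) ^ ℓ • x)

/-- The family of magnitudes of the convolutions `|φ_ℓ ∗ f|`. -/
def lpConvFamily {n : ℕ} (φ₀ Φ : SchwartzMap (EuclideanSpace ℝ (Fin n)) ℂ)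
    (f : EuclideanSpace ℝ (Fin n) → ℂ) (ℓ : ℕ) (x : EuclideanSpace ℝ (Fin n)) : ℝ≥0∞ :=
  (‖∫ y, lpFamily φ₀ Φ ℓ y * f (x - y)‖₊ : ℝ≥0∞)

/-- The Besov-type norm `‖f‖_{B^{s(·),φ}_{p(·),q(·)}}` of a family
`u = (|φ_ℓ ∗ f|)_ℓ`: `sup_P φ(P)⁻¹ ‖{2^{js(·)} u_j χ_P}_{j ≥ max(j_P,0)}‖_{ℓ^{q(·)}(L^{p(·)})}`. -/
def besovNormFam {n : ℕ} (p q s : EuclideanSpace ℝ (Fin n) → ℝ)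
    (φ : EuclideanSpace ℝ (Fin n) → ℝ → ℝ)
    (u : ℕ → EuclideanSpace ℝ (Fin n) → ℝ≥0∞) : ℝ≥0∞ :=
  ⨆ (J : ℤ) (K : Fin n → ℤ),
    (ENNReal.ofReal (weightOn φ J K))⁻¹ *
      mixedNormR p q (fun m =>
        Set.indicator (dyadicCube J K) (fun x =>
          ENNReal.ofReal ((2 : ℝ) ^ ((((max J 0).toNat + m : ℕ) : ℝ) * s x)) *
            u ((max J 0).toNat + m) x))

/-- The Triebel–Lizorkin-type norm `‖f‖_{F^{s(·),φ}_{p(·),q(·)}}` of a family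
`u = (|φ_ℓ ∗ f|)_ℓ`. -/
def tlNormFam {n : ℕ} (p q s : EuclideanSpace ℝ (Fin n) → ℝ)
    (φ : EuclideanSpace ℝ (Fin n) → ℝ → ℝ)
    (u : ℕ → EuclideanSpace ℝ (Fin n) → ℝ≥0∞) : ℝ≥0∞ :=
  ⨆ (J : ℤ) (K : Fin n → ℤ),
    (ENNReal.ofReal (weightOn φ J K))⁻¹ *
      varNormR p (Set.indicator (dyadicCube J K) (fun x =>
        (∑' m : ℕ,
          (ENNReal.ofReal ((2 : ℝ) ^ ((((max J 0).toNat + m : ℕ) : ℝ) * s x)) *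
            u ((max J 0).toNat + m) x) ^ q x) ^ (1 / q x)))


/-! ### Auxiliary lemmas -/

section AuxLemmas

open scoped ENNReal

private lemma rpow_one_div_le_iff' {x y : ℝ≥0∞} {t : ℝ} (ht : 0 < t) :
    x ≤ y ^ (1/t) ↔ x ^ t ≤ y := by
  rw [one_div, ENNReal.le_rpow_inv_iff ht]

private lemma ennreal_tsum_rpow_le {ι : Type*} (a : ι → ℝ≥0∞) {t : ℝ} (ht : 0 < t) (ht1 : t ≤ 1) :
    (∑' i, a i) ^ t ≤ ∑' i, a i ^ t := by
  have hfin : ∀ F : Finset ι, (∑ i ∈ F, a i) ^ t ≤ ∑ i ∈ F, a i ^ t := by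
    intro F
    induction F using Finset.cons_induction with
    | empty => simp [ENNReal.zero_rpow_of_pos ht]
    | cons i F hi ih =>
        rw [Finset.sum_cons, Finset.sum_cons]
        exact le_trans (ENNReal.rpow_add_le_add_rpow _ _ ht.le ht1)
          (add_le_add le_rfl ih)
  rw [← rpow_one_div_le_iff' ht]
  rw [ENNReal.tsum_eq_iSup_sum]
  refine iSup_le fun F => ?_
  rw [rpow_one_div_le_iff' ht]
  exact le_trans (hfin F) (ENNReal.sum_le_tsum F)

private lemma ennreal_tsum_jensen (w d : ℕ → ℝ≥0∞) {t : ℝ} (ht : 1 < t) (hw : ∑' m, w m ≤ 1) :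
    (∑' m, w m * d m) ^ t ≤ ∑' m, w m * d m ^ t := by
  have ht0 : (0:ℝ) < t := lt_trans one_pos ht
  set t' := Real.conjExponent t with ht'def
  have hconj : t'.HolderConjugate t := (Real.HolderConjugate.conjExponent ht).symm
  have hwm : ∀ m, w m ≤ 1 := fun m => le_trans (ENNReal.le_tsum m) hw
  have key : ∑' m, w m * d m ≤ (∑' m, w m * d m ^ t) ^ (1/t) := by
    have ht'pos : (0:ℝ) < t' := hconj.pos
    have hsplit : ∀ m, w m * d m = (w m ^ (1/t')) * ((w m ^ (1/t)) * d m) := by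
      intro m
      rcases eq_or_ne (w m) 0 with h0 | h0
      · simp [h0, ENNReal.zero_rpow_of_pos (one_div_pos.mpr ht'pos),
          ENNReal.zero_rpow_of_pos (one_div_pos.mpr ht0)]
        exact Or.inl ht'pos
      · have htop : w m ≠ ⊤ := ne_top_of_le_ne_top ENNReal.one_ne_top (hwm m)
        rw [← mul_assoc, ← ENNReal.rpow_add _ _ h0 htop, one_div, one_div,
          hconj.inv_add_inv_eq_one, ENNReal.rpow_one]
    calc ∑' m, w m * d m = ∑' m, (w m ^ (1/t')) * ((w m ^ (1/t)) * d m) := by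
          exact tsum_congr hsplit
      _ ≤ (∑' m, (w m ^ (1/t')) ^ t') ^ (1/t') * (∑' m, ((w m ^ (1/t)) * d m) ^ t) ^ (1/t) := by
          have := ENNReal.lintegral_mul_le_Lp_mul_Lq (Measure.count : Measure ℕ) hconj
            (measurable_from_top.aemeasurable) (measurable_from_top.aemeasurable)
            (f := fun m => w m ^ (1/t')) (g := fun m => (w m ^ (1/t)) * d m)
          simpa [MeasureTheory.lintegral_count] using this
      _ ≤ 1 * (∑' m, w m * d m ^ t) ^ (1/t) := by
          refine mul_le_mul' ?_ ?_
          · have hbase : (∑' m, (w m ^ (1/t')) ^ t') = ∑' m, w m :=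
              tsum_congr (fun m => by
                rw [← ENNReal.rpow_mul, one_div, inv_mul_cancel₀ ht'pos.ne', ENNReal.rpow_one])
            rw [hbase]
            exact ENNReal.rpow_le_one hw (one_div_pos.mpr ht'pos).le
          · have hinner : ∀ m, ((w m ^ (1/t)) * d m) ^ t = w m * d m ^ t := fun m => by
              rw [ENNReal.mul_rpow_of_nonneg _ _ ht0.le, ← ENNReal.rpow_mul, one_div,
                inv_mul_cancel₀ ht0.ne', ENNReal.rpow_one]
            rw [tsum_congr hinner]
      _ = (∑' m, w m * d m ^ t) ^ (1/t) := one_mul _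
  rw [rpow_one_div_le_iff' ht0] at key
  exact key

private lemma le_mul_sInf {C N : ℝ≥0∞} (hC0 : C ≠ 0) (hCtop : C ≠ ∞) {S : Set ℝ≥0∞}
    (h : ∀ l ∈ S, N ≤ C * l) : N ≤ C * sInf S := by
  have h1 : C⁻¹ * N ≤ sInf S := by
    refine le_sInf fun l hl => ?_
    calc C⁻¹ * N ≤ C⁻¹ * (C * l) := mul_le_mul_right (h l hl) _
      _ = l := by rw [← mul_assoc, ENNReal.inv_mul_cancel hC0 hCtop, one_mul]
  calc N = C * (C⁻¹ * N) := by
        rw [← mul_assoc, ENNReal.mul_inv_cancel hC0 hCtop, one_mul]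
    _ ≤ C * sInf S := mul_le_mul_right h1 _

private lemma sInf_eq_zero_of_Ioi_subset {S : Set ℝ≥0∞} (h : Set.Ioi 0 ⊆ S) : sInf S = 0 := by
  by_contra hne
  have hpos : 0 < sInf S := pos_iff_ne_zero.mpr hne
  have hle1 : sInf S ≤ 1 := sInf_le (h (by norm_num))
  have h2 : sInf S ≤ sInf S / 2 :=
    sInf_le (h (ENNReal.half_pos hne))
  exact absurd h2 (not_le.mpr (ENNReal.half_lt_self hne
    (ne_top_of_le_ne_top ENNReal.one_ne_top hle1)))

/-- The inner infimum of a function that vanishes a.e. is zero. -/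
private lemma mixedInnerR_of_ae_zero {n : ℕ} {p r : EuclideanSpace ℝ (Fin n) → ℝ}
    {g : EuclideanSpace ℝ (Fin n) → ℝ≥0∞} (hg : g =ᵐ[volume] 0)
    (hp : ∀ᵐ x : EuclideanSpace ℝ (Fin n), 0 < p x) :
    mixedInnerR p r g = 0 := by
  refine sInf_eq_zero_of_Ioi_subset fun mu hmu => ⟨hmu, ?_⟩
  have : varModularR p (fun x => g x / mu ^ (1/r x)) = 0 := by
    rw [varModularR, ← lintegral_zero]
    refine lintegral_congr_ae ?_
    filter_upwards [hg, hp] with x hx hpx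
    rw [hx]
    simp [ENNReal.zero_rpow_of_pos hpx]
  rw [this]
  exact zero_le_one

end AuxLemmas
noncomputable section

private lemma bracket_bound {b T μ : ℝ≥0∞} {px qx : ℝ}
    (hppos : 0 < px) (hqpos : 0 < qx)
    (hbT : b ≤ T) (hTtop : T ≠ ∞) (hμ0 : μ ≠ 0) (hμtop : μ ≠ ∞) :
    (b / μ ^ (1/max px qx)) ^ px ≤ μ⁻¹ * (b ^ qx * T ^ (px - qx)) + T ^ px := by
  have hLHS : (b / μ ^ (1/max px qx)) ^ px = b ^ px * (μ ^ (px / max px qx))⁻¹ := by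
    rw [ENNReal.div_rpow_of_nonneg _ _ hppos.le, div_eq_mul_inv, ← ENNReal.rpow_mul,
      one_div, inv_mul_eq_div]
  rcases le_or_gt qx px with hc | hc
  · -- qx ≤ px, max = px
    rw [hLHS, max_eq_left hc, div_self hppos.ne', ENNReal.rpow_one]
    refine le_trans ?_ le_self_add
    rw [mul_comm (μ⁻¹) _]
    refine mul_le_mul' ?_ le_rfl
    rcases eq_or_ne b 0 with hb0 | hb0
    · rw [hb0, ENNReal.zero_rpow_of_pos hppos]; exact zero_le
    · have hbtop : b ≠ ∞ := ne_top_of_le_ne_top hTtop hbT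
      have hsum : qx + (px - qx) = px := by ring
      calc b ^ px = b ^ qx * b ^ (px - qx) := by
            rw [← ENNReal.rpow_add _ _ hb0 hbtop, hsum]
        _ ≤ b ^ qx * T ^ (px - qx) :=
            mul_le_mul' le_rfl (ENNReal.rpow_le_rpow hbT (by linarith))
  · -- px < qx, max = qx
    rw [hLHS, max_eq_right hc.le]
    have hμq0 : μ ^ (1/qx) ≠ 0 := by
      simp [ENNReal.rpow_eq_zero_iff, hμ0, hμtop]
    have hμqtop : μ ^ (1/qx) ≠ ∞ := by
      simp [ENNReal.rpow_eq_top_iff, hμ0, hμtop]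
    have hμpq0 : μ ^ (px/qx) ≠ 0 := by
      simp [ENNReal.rpow_eq_zero_iff, hμ0, hμtop]
    have hμpqtop : μ ^ (px/qx) ≠ ∞ := by
      simp [ENNReal.rpow_eq_top_iff, hμ0, hμtop]
    by_cases hb2 : b ≤ T * μ ^ (1/qx)
    · refine le_trans ?_ le_add_self
      have h1 : b ^ px ≤ T ^ px * μ ^ (px/qx) := by
        calc b ^ px ≤ (T * μ ^ (1/qx)) ^ px := ENNReal.rpow_le_rpow hb2 hppos.le
          _ = T ^ px * μ ^ (px/qx) := by
              rw [ENNReal.mul_rpow_of_nonneg _ _ hppos.le, ← ENNReal.rpow_mul,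
                one_div, inv_mul_eq_div]
      calc b ^ px * (μ ^ (px/qx))⁻¹ ≤ T ^ px * μ ^ (px/qx) * (μ ^ (px/qx))⁻¹ :=
            mul_le_mul' h1 le_rfl
        _ = T ^ px := by
            rw [mul_assoc, ENNReal.mul_inv_cancel hμpq0 hμpqtop, mul_one]
    · push_neg at hb2
      refine le_trans ?_ le_self_add
      have hb0 : b ≠ 0 := (lt_of_le_of_lt zero_le hb2).ne'
      have hbtop : b ≠ ∞ := ne_top_of_le_ne_top hTtop hbT
      have hTle : T ≤ b * (μ ^ (1/qx))⁻¹ := by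
        rw [← div_eq_mul_inv, ENNReal.le_div_iff_mul_le (Or.inl hμq0) (Or.inl hμqtop)]
        exact hb2.le
      have hneg : (b * (μ ^ (1/qx))⁻¹) ^ (px - qx) ≤ T ^ (px - qx) := by
        have h1 : px - qx = -(qx - px) := by ring
        rw [h1, ENNReal.rpow_neg, ENNReal.rpow_neg]
        exact ENNReal.inv_le_inv.mpr (ENNReal.rpow_le_rpow hTle (by linarith))
      have h4 : μ⁻¹ * (μ ^ ((px - qx)/qx))⁻¹ = (μ ^ (px/qx))⁻¹ := by
        rw [← ENNReal.mul_inv (Or.inl hμ0) (Or.inl hμtop)]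
        congr 1
        nth_rewrite 1 [← ENNReal.rpow_one μ]
        rw [← ENNReal.rpow_add _ _ hμ0 hμtop]
        congr 1
        field_simp
        ring
      have hkey : μ⁻¹ * (b ^ qx * (b * (μ ^ (1/qx))⁻¹) ^ (px - qx))
          = b ^ px * (μ ^ (px/qx))⁻¹ := by
        have hμiq : (μ ^ (1/qx))⁻¹ ≠ ∞ := by
          simp [ENNReal.inv_eq_top]
          simp [ENNReal.rpow_eq_zero_iff, hμ0, hμtop]
        rw [ENNReal.mul_rpow_of_ne_top hbtop hμiq]
        have h2 : b ^ qx * (b ^ (px - qx) * ((μ ^ (1/qx))⁻¹) ^ (px - qx))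
            = b ^ px * ((μ ^ (1/qx))⁻¹) ^ (px - qx) := by
          rw [← mul_assoc, ← ENNReal.rpow_add _ _ hb0 hbtop]
          congr 2
          ring
        have h3 : ((μ ^ (1/qx))⁻¹) ^ (px - qx) = (μ ^ ((px - qx)/qx))⁻¹ := by
          rw [ENNReal.inv_rpow, ← ENNReal.rpow_mul, one_div, inv_mul_eq_div]
        rw [h2, h3, ← mul_assoc, mul_comm (μ⁻¹) (b ^ px), mul_assoc, h4]
      rw [← hkey]
      exact mul_le_mul' le_rfl (mul_le_mul' le_rfl hneg)
private lemma jensen_bound (b w : ℕ → ℝ≥0∞) {px qx : ℝ}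
    (hppos : 0 < px) (hqpos : 0 < qx)
    (hw0 : ∀ m, w m ≠ 0) (hwtop : ∀ m, w m ≠ ∞)
    (hwsum : ∑' m, w m ≤ 1) :
    (∑' m, b m ^ qx) ^ (px/qx)
      ≤ ∑' m, w m * (b m / w m ^ (1/min px qx)) ^ px := by
  have hrpos : 0 < min px qx := lt_min hppos hqpos
  have hwr0 : ∀ m, w m ^ (1/min px qx) ≠ 0 := fun m => by
    simp [ENNReal.rpow_eq_zero_iff, hw0 m, hwtop m]
  have hwrtop : ∀ m, w m ^ (1/min px qx) ≠ ∞ := fun m => by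
    simp [ENNReal.rpow_eq_top_iff, hw0 m, hwtop m]
  have hbm : ∀ m, b m = w m ^ (1/min px qx) * (b m / w m ^ (1/min px qx)) := fun m => by
    rw [mul_comm, ENNReal.div_mul_cancel (hwr0 m) (hwrtop m)]
  rcases le_or_gt px qx with hpq | hpq
  · -- px ≤ qx : min = px, use subadditivity of t ↦ t^(px/qx)
    have hmin : min px qx = px := min_eq_left hpq
    have ht : 0 < px/qx := div_pos hppos hqpos
    have ht1 : px/qx ≤ 1 := (div_le_one hqpos).mpr hpq
    calc (∑' m, b m ^ qx) ^ (px/qx)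
        ≤ ∑' m, (b m ^ qx) ^ (px/qx) := ennreal_tsum_rpow_le _ ht ht1
      _ = ∑' m, w m * (b m / w m ^ (1/min px qx)) ^ px := by
          refine tsum_congr fun m => ?_
          rw [hmin]
          conv_lhs => rw [hbm m, hmin]
          rw [ENNReal.mul_rpow_of_nonneg _ _ hqpos.le,
            ENNReal.mul_rpow_of_nonneg _ _ ht.le,
            ← ENNReal.rpow_mul, ← ENNReal.rpow_mul, ← ENNReal.rpow_mul]
          congr 2
          · field_simp
            simp
          · field_simp
  · -- qx < px : min = qx, use Jensen
    have hmin : min px qx = qx := min_eq_right hpq.le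
    have ht : 1 < px/qx := (one_lt_div hqpos).mpr hpq
    have hterm : ∀ m, b m ^ qx = w m * ((b m / w m ^ (1/min px qx)) ^ qx) := fun m => by
      conv_lhs => rw [hbm m]
      rw [ENNReal.mul_rpow_of_nonneg _ _ hqpos.le, ← ENNReal.rpow_mul, hmin,
        one_div, inv_mul_cancel₀ hqpos.ne', ENNReal.rpow_one]
    rw [tsum_congr hterm]
    refine le_trans (ennreal_tsum_jensen _ _ ht hwsum) ?_
    refine le_of_eq (tsum_congr fun m => ?_)
    rw [← ENNReal.rpow_mul]
    congr 2
    field_simp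

private lemma tsum_div_rpow_eq {a : ℕ → ℝ≥0∞} {lam : ℝ≥0∞} (h0 : lam ≠ 0) (ht : lam ≠ ∞)
    {qx : ℝ} (hq : 0 < qx) :
    (∑' m, (a m / lam) ^ qx) ^ (1/qx) = (∑' m, a m ^ qx) ^ (1/qx) / lam := by
  have h1 : ∀ m, (a m / lam) ^ qx = a m ^ qx * (lam ^ qx)⁻¹ := fun m => by
    rw [ENNReal.div_rpow_of_nonneg _ _ hq.le, div_eq_mul_inv]
  rw [tsum_congr h1, ENNReal.tsum_mul_right,
    ENNReal.mul_rpow_of_nonneg _ _ (one_div_pos.mpr hq).le,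
    ENNReal.inv_rpow, ← ENNReal.rpow_mul, mul_one_div_cancel hq.ne', ENNReal.rpow_one,
    ← div_eq_mul_inv]

private lemma coreB {n : ℕ} (p q : EuclideanSpace ℝ (Fin n) → ℝ)
    (hp : Measurable p) (hq : Measurable q)
    (εp εq M : ℝ) (hεp : 0 < εp) (hεq : 0 < εq) (hM : 1 ≤ M)
    (hae : ∀ᵐ x : EuclideanSpace ℝ (Fin n), εp ≤ p x ∧ εq ≤ q x ∧ p x ≤ M ∧ q x ≤ M)
    (a : ℕ → EuclideanSpace ℝ (Fin n) → ℝ≥0∞) (ha : ∀ m, Measurable (a m)) :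
    mixedNormR p (fun x => max (p x) (q x)) a
      ≤ (2:ℝ≥0∞) ^ ((M/εp : ℝ)) * varNormR p (fun x => (∑' m, a m x ^ q x) ^ (1/q x)) := by
  have hMε : 0 < M/εp := div_pos (lt_of_lt_of_le one_pos hM) hεp
  set δ : ℝ≥0∞ := (2:ℝ≥0∞) ^ ((M/εp : ℝ)) with hδdef
  have hδ0 : δ ≠ 0 := by
    simp [hδdef, ENNReal.rpow_eq_zero_iff]
  have hδtop : δ ≠ ∞ := by
    simp [hδdef, ENNReal.rpow_eq_top_iff, not_lt.mpr hMε.le]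
  have hδ1 : 1 ≤ δ := by
    have h1 : (2:ℝ≥0∞) ^ (0:ℝ) = 1 := ENNReal.rpow_zero
    rw [hδdef, ← h1]
    exact ENNReal.rpow_le_rpow_of_exponent_le one_le_two hMε.le
  refine le_mul_sInf hδ0 hδtop fun lam hlam => ?_
  obtain ⟨hlam0, hmod⟩ := hlam
  rcases eq_or_ne lam ∞ with rfl | hlamtop
  · rw [ENNReal.mul_top hδ0]; exact le_top
  -- notation
  set b : ℕ → EuclideanSpace ℝ (Fin n) → ℝ≥0∞ := fun m x => a m x / lam with hbdef
  set T : EuclideanSpace ℝ (Fin n) → ℝ≥0∞ :=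
    fun x => (∑' m, (b m x) ^ q x) ^ (1/q x) with hTdef
  have hbm : ∀ m, Measurable (b m) := fun m => (ha m).div_const _
  have hT : Measurable T :=
    (Measurable.ennreal_tsum fun m => (hbm m).pow hq).pow (measurable_const.div hq)
  -- modular bound for T
  have hTmod : ∫⁻ x, T x ^ p x ≤ 1 := by
    refine le_trans (le_of_eq (lintegral_congr_ae ?_)) hmod
    filter_upwards [hae] with x hx
    have hqx : 0 < q x := lt_of_lt_of_le hεq hx.2.1
    rw [hTdef]
    simp only
    rw [tsum_div_rpow_eq hlam0.ne' hlamtop hqx]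
  have hTfin : ∀ᵐ x : EuclideanSpace ℝ (Fin n), T x ≠ ∞ := by
    have h1 := ae_lt_top (hT.pow hp) (ne_top_of_le_ne_top ENNReal.one_ne_top hTmod)
    filter_upwards [h1, hae] with x hx hx2
    intro hTx
    rw [hTx, ENNReal.top_rpow_of_pos (lt_of_lt_of_le hεp hx2.1)] at hx
    exact absurd hx (lt_irrefl _)
  have hbT : ∀ x : EuclideanSpace ℝ (Fin n), 0 < q x → ∀ m, b m x ≤ T x := by
    intro x hqx m
    have h1 : (b m x) ^ q x ≤ ∑' k, (b k x) ^ q x := ENNReal.le_tsum m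
    calc b m x = ((b m x) ^ q x) ^ (1/q x) := by
          rw [← ENNReal.rpow_mul, mul_one_div_cancel hqx.ne', ENNReal.rpow_one]
      _ ≤ T x := ENNReal.rpow_le_rpow h1 (one_div_pos.mpr hqx).le
  -- the weights
  set μ : ℕ → ℝ≥0∞ := fun m => ∫⁻ x, (b m x) ^ q x * (T x) ^ (p x - q x) with hμdef
  have hμmeas : ∀ m, Measurable fun x : EuclideanSpace ℝ (Fin n) =>
      (b m x) ^ q x * (T x) ^ (p x - q x) := fun m =>
    ((hbm m).pow hq).mul (hT.pow (hp.sub hq))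
  have hμsum : ∑' m, μ m ≤ 1 := by
    calc ∑' m, μ m = ∫⁻ x, ∑' m, (b m x) ^ q x * (T x) ^ (p x - q x) :=
          (lintegral_tsum fun m => (hμmeas m).aemeasurable).symm
      _ ≤ ∫⁻ x, T x ^ p x := by
          refine lintegral_mono_ae ?_
          filter_upwards [hae] with x hx
          have hqx : 0 < q x := lt_of_lt_of_le hεq hx.2.1
          have hpx : 0 < p x := lt_of_lt_of_le hεp hx.1
          rw [ENNReal.tsum_mul_right]
          have hFT : (∑' m, (b m x) ^ q x) = T x ^ q x := by
            rw [hTdef]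
            simp only
            rw [← ENNReal.rpow_mul, one_div, inv_mul_cancel₀ hqx.ne', ENNReal.rpow_one]
          rw [hFT]
          rcases eq_or_ne (T x) 0 with h0 | h0
          · rw [h0, ENNReal.zero_rpow_of_pos hqx, zero_mul]; exact zero_le
          rcases eq_or_ne (T x) ∞ with htop | htop
          · rw [htop, ENNReal.top_rpow_of_pos hpx]; exact le_top
          rw [← ENNReal.rpow_add _ _ h0 htop]
          have : q x + (p x - q x) = p x := by ring
          rw [this]
      _ ≤ 1 := hTmod
  -- inner estimates
  have hinner : ∀ m, mixedInnerR p (fun x => max (p x) (q x))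
      (fun x => a m x / (δ * lam)) ≤ μ m := by
    intro m
    rcases eq_or_ne (μ m) 0 with hμ0 | hμ0
    · rw [hμ0]
      refine le_of_eq (mixedInnerR_of_ae_zero ?_ ?_)
      · have hz : (fun x : EuclideanSpace ℝ (Fin n) =>
            (b m x) ^ q x * (T x) ^ (p x - q x)) =ᵐ[volume] 0 :=
          (lintegral_eq_zero_iff (hμmeas m)).mp hμ0
        filter_upwards [hz, hae, hTfin] with x hx hx2 hx3
        have hqx : 0 < q x := lt_of_lt_of_le hεq hx2.2.1
        have hb0 : b m x = 0 := by
          rcases mul_eq_zero.mp hx with h1 | h1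
          · rcases (ENNReal.rpow_eq_zero_iff).mp h1 with ⟨h2, _⟩ | ⟨_, h2⟩
            · exact h2
            · exact absurd h2 (not_lt.mpr hqx.le)
          · rcases (ENNReal.rpow_eq_zero_iff).mp h1 with ⟨h2, _⟩ | ⟨h2, _⟩
            · exact le_antisymm (h2 ▸ hbT x hqx m) zero_le
            · exact absurd h2 hx3
        have ha0 : a m x = 0 := by
          rcases ENNReal.div_eq_zero_iff.mp hb0 with h | h
          · exact h
          · exact absurd h hlamtop
        show a m x / (δ * lam) = 0
        rw [ha0, ENNReal.zero_div]
      · filter_upwards [hae] with x hx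
        exact lt_of_lt_of_le hεp hx.1
    · have hμpos : 0 < μ m := pos_iff_ne_zero.mpr hμ0
      have hμ1 : μ m ≤ 1 := le_trans (ENNReal.le_tsum m) hμsum
      have hμtop : μ m ≠ ∞ := ne_top_of_le_ne_top ENNReal.one_ne_top hμ1
      refine sInf_le ⟨hμpos, ?_⟩
      have hδe0 : δ ^ (-εp) ≠ 0 := by
        simp [ENNReal.rpow_eq_zero_iff, hδ0, hδtop]
      have hδetop : δ ^ (-εp) ≠ ∞ := by
        simp [ENNReal.rpow_eq_top_iff, hδ0, hδtop]
      have hptw : ∀ᵐ x : EuclideanSpace ℝ (Fin n),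
          ((a m x / (δ * lam)) / (μ m) ^ (1/ max (p x) (q x))) ^ p x
            ≤ δ ^ (-εp) *
              ((μ m)⁻¹ * ((b m x) ^ q x * (T x) ^ (p x - q x)) + T x ^ p x) := by
        filter_upwards [hae, hTfin] with x hx hTx
        obtain ⟨hpx, hqx, hpM, hqM⟩ := hx
        have hppos : 0 < p x := lt_of_lt_of_le hεp hpx
        have hqpos : 0 < q x := lt_of_lt_of_le hεq hqx
        have h0 : a m x / (δ * lam) = b m x * δ⁻¹ := by
          rw [div_eq_mul_inv, ENNReal.mul_inv (Or.inl hδ0) (Or.inl hδtop), hbdef]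
          simp only [div_eq_mul_inv]
          ring
        have hsplit : ((a m x / (δ * lam)) / (μ m) ^ (1/ max (p x) (q x))) ^ p x
            = ((b m x / (μ m) ^ (1/ max (p x) (q x))) ^ p x) * (δ⁻¹) ^ p x := by
          have harr : a m x / (δ * lam) / (μ m) ^ (1/ max (p x) (q x))
              = (b m x / (μ m) ^ (1/ max (p x) (q x))) * δ⁻¹ := by
            rw [h0]
            simp only [div_eq_mul_inv]
            ring
          rw [harr, ENNReal.mul_rpow_of_nonneg _ _ hppos.le]
        rw [hsplit]
        have hδe : (δ⁻¹) ^ p x ≤ δ ^ (-εp) := by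
          rw [ENNReal.inv_rpow, ← ENNReal.rpow_neg]
          exact ENNReal.rpow_le_rpow_of_exponent_le hδ1 (by linarith)
        calc ((b m x / (μ m) ^ (1/ max (p x) (q x))) ^ p x) * (δ⁻¹) ^ p x
            ≤ ((μ m)⁻¹ * ((b m x) ^ q x * (T x) ^ (p x - q x)) + T x ^ p x) * δ ^ (-εp) :=
              mul_le_mul' (bracket_bound hppos hqpos (hbT x hqpos m) hTx hμ0 hμtop) hδe
          _ = _ := mul_comm _ _
      calc varModularR p
            (fun x => (a m x / (δ * lam)) / (μ m) ^ (1/ max (p x) (q x)))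
          ≤ ∫⁻ x, δ ^ (-εp) *
              ((μ m)⁻¹ * ((b m x) ^ q x * (T x) ^ (p x - q x)) + T x ^ p x) :=
            lintegral_mono_ae hptw
        _ = δ ^ (-εp) * ((μ m)⁻¹ * μ m + ∫⁻ x, T x ^ p x) := by
            rw [lintegral_const_mul' _ _ hδetop]
            congr 1
            rw [lintegral_add_left (((hμmeas m).const_mul _))]
            congr 1
            exact lintegral_const_mul' _ _ (ENNReal.inv_ne_top.mpr hμ0)
        _ ≤ δ ^ (-εp) * (1 + 1) := by
            refine mul_le_mul' le_rfl (add_le_add ?_ hTmod)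
            rw [ENNReal.inv_mul_cancel hμ0 hμtop]
        _ ≤ 1 := by
            have h2 : δ ^ (-εp) * (1 + 1) = (2:ℝ≥0∞) ^ (-M + 1 : ℝ) := by
              rw [hδdef, ← ENNReal.rpow_mul]
              have : (M/εp) * (-εp) = -M := by field_simp
              rw [this]
              have h3 : (1 + 1 : ℝ≥0∞) = (2:ℝ≥0∞) ^ (1:ℝ) := by
                rw [ENNReal.rpow_one]; norm_num
              rw [h3, ← ENNReal.rpow_add _ _ (by norm_num) (by norm_num)]
            have h1 : (2:ℝ≥0∞) ^ (0:ℝ) = 1 := ENNReal.rpow_zero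
            rw [h2, ← h1]
            exact ENNReal.rpow_le_rpow_of_exponent_le one_le_two (by linarith)
  -- conclude
  have hpos : 0 < δ * lam := ENNReal.mul_pos hδ0 hlam0.ne'
  refine sInf_le ⟨hpos, ?_⟩
  calc mixedModularR p (fun x => max (p x) (q x)) (fun v x => a v x / (δ * lam))
      = ∑' m, mixedInnerR p (fun x => max (p x) (q x)) (fun x => a m x / (δ * lam)) := rfl
    _ ≤ ∑' m, μ m := ENNReal.tsum_le_tsum hinner
    _ ≤ 1 := hμsum

private lemma coreA {n : ℕ} (p q : EuclideanSpace ℝ (Fin n) → ℝ)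
    (hp : Measurable p) (hq : Measurable q)
    (εp εq M : ℝ) (hεp : 0 < εp) (hεq : 0 < εq) (hM : 1 ≤ M)
    (hae : ∀ᵐ x : EuclideanSpace ℝ (Fin n), εp ≤ p x ∧ εq ≤ q x ∧ p x ≤ M ∧ q x ≤ M)
    (a : ℕ → EuclideanSpace ℝ (Fin n) → ℝ≥0∞) (ha : ∀ m, Measurable (a m)) :
    varNormR p (fun x => (∑' m, a m x ^ q x) ^ (1/q x))
      ≤ (2:ℝ≥0∞) ^ ((M/(min εp εq * εp) : ℝ)) *
          mixedNormR p (fun x => min (p x) (q x)) a := by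
  have hεr : 0 < min εp εq := lt_min hεp hεq
  have hMεr : 0 < M / min εp εq := div_pos (lt_of_lt_of_le one_pos hM) hεr
  have hMC : 0 < M / (min εp εq * εp) := div_pos (lt_of_lt_of_le one_pos hM) (mul_pos hεr hεp)
  set K : ℝ≥0∞ := (2:ℝ≥0∞) ^ ((M/min εp εq : ℝ)) with hKdef
  set C : ℝ≥0∞ := (2:ℝ≥0∞) ^ ((M/(min εp εq * εp) : ℝ)) with hCdef
  have hK0 : K ≠ 0 := by simp [hKdef, ENNReal.rpow_eq_zero_iff]
  have hKtop : K ≠ ∞ := by simp [hKdef, ENNReal.rpow_eq_top_iff, not_lt.mpr hMεr.le]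
  have hC0 : C ≠ 0 := by simp [hCdef, ENNReal.rpow_eq_zero_iff]
  have hCtop : C ≠ ∞ := by simp [hCdef, ENNReal.rpow_eq_top_iff, not_lt.mpr hMC.le]
  have hC1 : 1 ≤ C := by
    have h1 : (2:ℝ≥0∞) ^ (0:ℝ) = 1 := ENNReal.rpow_zero
    rw [hCdef, ← h1]
    exact ENNReal.rpow_le_rpow_of_exponent_le one_le_two hMC.le
  have hCKinv : C ^ (-εp) = K⁻¹ := by
    rw [hCdef, ← ENNReal.rpow_mul]
    have h2 : M / (min εp εq * εp) * (-εp) = -(M / min εp εq) := by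
      field_simp
    rw [h2, ENNReal.rpow_neg, hKdef]
  refine le_mul_sInf hC0 hCtop fun lam hlam => ?_
  obtain ⟨hlam0, hmod⟩ := hlam
  rcases eq_or_ne lam ∞ with rfl | hlamtop
  · rw [ENNReal.mul_top hC0]; exact le_top
  have hmod' : ∑' (v : ℕ), mixedInnerR p (fun x => min (p x) (q x))
      (fun x => a v x / lam) ≤ 1 := hmod
  have hIle : ∀ m, mixedInnerR p (fun x => min (p x) (q x)) (fun x => a m x / lam) ≤ 1 :=
    fun m => le_trans (ENNReal.le_tsum m) hmod'
  have hItop : ∀ m, mixedInnerR p (fun x => min (p x) (q x)) (fun x => a m x / lam) ≠ ∞ :=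
    fun m => ne_top_of_le_ne_top ENNReal.one_ne_top (hIle m)
  -- choose near-optimal inner parameters
  have hex : ∀ m, ∃ μm : ℝ≥0∞, (0 < μm ∧
      varModularR p (fun x => (a m x / lam) / μm ^ (1/ min (p x) (q x))) ≤ 1) ∧
      μm < mixedInnerR p (fun x => min (p x) (q x)) (fun x => a m x / lam) + (2⁻¹:ℝ≥0∞)^(m+1) := by
    intro m
    have hlt : mixedInnerR p (fun x => min (p x) (q x)) (fun x => a m x / lam)
        < mixedInnerR p (fun x => min (p x) (q x)) (fun x => a m x / lam) + (2⁻¹:ℝ≥0∞)^(m+1) :=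
      ENNReal.lt_add_right (hItop m) (pow_ne_zero _ (by norm_num))
    obtain ⟨μm, hmem, hlt2⟩ := sInf_lt_iff.mp hlt
    exact ⟨μm, hmem, hlt2⟩
  choose μ hμmem hμlt using hex
  have hμpos : ∀ m, 0 < μ m := fun m => (hμmem m).1
  have hμmod : ∀ m,
      varModularR p (fun x => (a m x / lam) / μ m ^ (1/ min (p x) (q x))) ≤ 1 :=
    fun m => (hμmem m).2
  have hμsum : ∑' m, μ m ≤ 2 := by
    calc ∑' m, μ m
        ≤ ∑' m, (mixedInnerR p (fun x => min (p x) (q x)) (fun x => a m x / lam)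
            + (2⁻¹:ℝ≥0∞)^(m+1)) := ENNReal.tsum_le_tsum fun m => (hμlt m).le
      _ = (∑' m, mixedInnerR p (fun x => min (p x) (q x)) (fun x => a m x / lam))
            + ∑' m, (2⁻¹:ℝ≥0∞)^(m+1) := ENNReal.tsum_add
      _ ≤ 1 + 1 := by
          refine add_le_add hmod' (le_of_eq ?_)
          rw [ENNReal.tsum_geometric_add_one, ENNReal.one_sub_inv_two, inv_inv,
            ENNReal.inv_mul_cancel (by norm_num) (by norm_num)]
      _ = 2 := one_add_one_eq_two
  set w : ℕ → ℝ≥0∞ := fun m => μ m / 2 with hwdef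
  have hμtop : ∀ m, μ m ≠ ∞ := fun m =>
    ne_top_of_le_ne_top (by norm_num) (le_trans (ENNReal.le_tsum m) hμsum)
  have hw0 : ∀ m, w m ≠ 0 := fun m => by
    rw [hwdef]
    simp only [ne_eq, ENNReal.div_eq_zero_iff]
    push_neg
    exact ⟨(hμpos m).ne', by norm_num⟩
  have hwtop : ∀ m, w m ≠ ∞ := fun m =>
    (ENNReal.div_lt_top (hμtop m) (by norm_num)).ne
  have hwsum : ∑' m, w m ≤ 1 := by
    rw [hwdef]
    simp only [div_eq_mul_inv]
    rw [ENNReal.tsum_mul_right]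
    calc (∑' m, μ m) * 2⁻¹ ≤ 2 * 2⁻¹ := mul_le_mul' hμsum le_rfl
      _ = 1 := ENNReal.mul_inv_cancel (by norm_num) (by norm_num)
  -- modular bounds with the halved parameters
  have hwmod : ∀ m, ∫⁻ x, ((a m x / lam) / w m ^ (1/ min (p x) (q x))) ^ p x ≤ K := by
    intro m
    have key : ∀ᵐ x : EuclideanSpace ℝ (Fin n),
        ((a m x / lam) / w m ^ (1/ min (p x) (q x))) ^ p x
          ≤ ((a m x / lam) / μ m ^ (1/ min (p x) (q x))) ^ p x * K := by
      filter_upwards [hae] with x hx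
      obtain ⟨hpx, hqx, hpM, hqM⟩ := hx
      have hppos : 0 < p x := lt_of_lt_of_le hεp hpx
      have hrx : min εp εq ≤ min (p x) (q x) := min_le_min hpx hqx
      have hrpos : 0 < min (p x) (q x) := lt_of_lt_of_le hεr hrx
      have h2r0 : ((2:ℝ≥0∞) ^ (1/ min (p x) (q x))) ≠ 0 := by
        simp [ENNReal.rpow_eq_zero_iff]
      have h2rtop : ((2:ℝ≥0∞) ^ (1/ min (p x) (q x))) ≠ ∞ := by
        simp [ENNReal.rpow_eq_top_iff, not_lt.mpr (one_div_pos.mpr hrpos).le]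
      have hμr0 : μ m ^ (1/ min (p x) (q x)) ≠ 0 := by
        simp [ENNReal.rpow_eq_zero_iff, (hμpos m).ne', hμtop m]
      have hμrtop : μ m ^ (1/ min (p x) (q x)) ≠ ∞ := by
        simp [ENNReal.rpow_eq_top_iff, (hμpos m).ne', hμtop m]
      have hsplit : (a m x / lam) / w m ^ (1/ min (p x) (q x))
          = ((a m x / lam) / μ m ^ (1/ min (p x) (q x))) * (2:ℝ≥0∞) ^ (1/ min (p x) (q x)) := by
        have hw_eq : w m ^ (1/ min (p x) (q x))
            = μ m ^ (1/ min (p x) (q x)) / (2:ℝ≥0∞) ^ (1/ min (p x) (q x)) := by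
          rw [hwdef]
          simp only
          rw [ENNReal.div_rpow_of_nonneg _ _ (one_div_pos.mpr hrpos).le]
        rw [hw_eq, div_eq_mul_inv (a m x / lam),
          ENNReal.inv_div (Or.inl h2rtop) (Or.inl h2r0)]
        simp only [div_eq_mul_inv]
        ring
      rw [hsplit, ENNReal.mul_rpow_of_nonneg _ _ hppos.le, ← ENNReal.rpow_mul]
      refine mul_le_mul' le_rfl ?_
      rw [hKdef]
      refine ENNReal.rpow_le_rpow_of_exponent_le one_le_two ?_
      have h5 : 1 / min (p x) (q x) * p x = p x / min (p x) (q x) := by ring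
      rw [h5]
      exact div_le_div₀ (by linarith) hpM hεr hrx
    calc ∫⁻ x, ((a m x / lam) / w m ^ (1/ min (p x) (q x))) ^ p x
        ≤ ∫⁻ x, ((a m x / lam) / μ m ^ (1/ min (p x) (q x))) ^ p x * K :=
          lintegral_mono_ae key
      _ = (∫⁻ x, ((a m x / lam) / μ m ^ (1/ min (p x) (q x))) ^ p x) * K :=
          lintegral_mul_const' _ _ hKtop
      _ ≤ 1 * K := mul_le_mul' (hμmod m) le_rfl
      _ = K := one_mul _
  -- conclusion: membership of C * lam in the defining set of the variable norm
  refine sInf_le ⟨ENNReal.mul_pos hC0 hlam0.ne', ?_⟩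
  have hptw : ∀ᵐ x : EuclideanSpace ℝ (Fin n),
      ((∑' m, a m x ^ q x) ^ (1/q x) / (C * lam)) ^ p x
        ≤ K⁻¹ * ∑' m, w m * ((a m x / lam) / w m ^ (1/ min (p x) (q x))) ^ p x := by
    filter_upwards [hae] with x hx
    obtain ⟨hpx, hqx, hpM, hqM⟩ := hx
    have hppos : 0 < p x := lt_of_lt_of_le hεp hpx
    have hqpos : 0 < q x := lt_of_lt_of_le hεq hqx
    have h1 : (∑' m, a m x ^ q x) ^ (1/q x) / (C * lam)
        = (∑' m, (a m x / lam) ^ q x) ^ (1/q x) * C⁻¹ := by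
      rw [tsum_div_rpow_eq hlam0.ne' hlamtop hqpos]
      simp only [div_eq_mul_inv]
      rw [ENNReal.mul_inv (Or.inl hC0) (Or.inl hCtop)]
      ring
    rw [h1, ENNReal.mul_rpow_of_nonneg _ _ hppos.le]
    have h2 : (C⁻¹) ^ p x ≤ K⁻¹ := by
      rw [ENNReal.inv_rpow, ← ENNReal.rpow_neg, ← hCKinv]
      exact ENNReal.rpow_le_rpow_of_exponent_le hC1 (by linarith)
    have h3 : ((∑' m, (a m x / lam) ^ q x) ^ (1/q x)) ^ p x
        ≤ ∑' m, w m * ((a m x / lam) / w m ^ (1/ min (p x) (q x))) ^ p x := by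
      rw [← ENNReal.rpow_mul]
      have h4 : 1 / q x * p x = p x / q x := by ring
      rw [h4]
      exact jensen_bound (fun m => a m x / lam) w hppos hqpos hw0 hwtop hwsum
    calc ((∑' m, (a m x / lam) ^ q x) ^ (1/q x)) ^ p x * (C⁻¹) ^ p x
        ≤ (∑' m, w m * ((a m x / lam) / w m ^ (1/ min (p x) (q x))) ^ p x) * K⁻¹ :=
          mul_le_mul' h3 h2
      _ = K⁻¹ * ∑' m, w m * ((a m x / lam) / w m ^ (1/ min (p x) (q x))) ^ p x :=
          mul_comm _ _
  have hKinvtop : K⁻¹ ≠ ∞ := ENNReal.inv_ne_top.mpr hK0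
  calc varModularR p
        (fun x => (∑' m, a m x ^ q x) ^ (1/q x) / (C * lam))
      ≤ ∫⁻ x, K⁻¹ * ∑' m, w m * ((a m x / lam) / w m ^ (1/ min (p x) (q x))) ^ p x :=
        lintegral_mono_ae hptw
    _ = K⁻¹ * ∫⁻ x, ∑' m, w m * ((a m x / lam) / w m ^ (1/ min (p x) (q x))) ^ p x :=
        lintegral_const_mul' _ _ hKinvtop
    _ = K⁻¹ * ∑' m, ∫⁻ x, w m * ((a m x / lam) / w m ^ (1/ min (p x) (q x))) ^ p x := by
        congr 1
        exact lintegral_tsum fun m =>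
          ((((ha m).div_const _).div ((measurable_const.pow
            (measurable_const.div (hp.min hq))))).pow hp).const_mul _ |>.aemeasurable
    _ = K⁻¹ * ∑' m, w m * ∫⁻ x, ((a m x / lam) / w m ^ (1/ min (p x) (q x))) ^ p x := by
        congr 1
        exact tsum_congr fun m => lintegral_const_mul' _ _ (hwtop m)
    _ ≤ K⁻¹ * ∑' m, w m * K :=
        mul_le_mul' le_rfl (ENNReal.tsum_le_tsum fun m => mul_le_mul' le_rfl (hwmod m))
    _ = K⁻¹ * ((∑' m, w m) * K) := by rw [ENNReal.tsum_mul_right]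
    _ ≤ K⁻¹ * (1 * K) := mul_le_mul' le_rfl (mul_le_mul' hwsum le_rfl)
    _ = 1 := by rw [one_mul, ENNReal.inv_mul_cancel hK0 hKtop]

private lemma measurable_coord {n : ℕ} (i : Fin n) :
    Measurable fun x : EuclideanSpace ℝ (Fin n) => x i :=
  (EuclideanSpace.proj (𝕜 := ℝ) i).continuous.measurable

private lemma measurableSet_dyadicCube {n : ℕ} (j : ℤ) (k : Fin n → ℤ) :
    MeasurableSet (dyadicCube j k) := by
  have h : dyadicCube j k =
      ⋂ i, ((fun x : EuclideanSpace ℝ (Fin n) => x i) ⁻¹'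
        (Set.Ico ((2:ℝ)^(-j) * (k i : ℝ)) ((2:ℝ)^(-j) * ((k i : ℝ) + 1)))) := by
    ext x
    simp [dyadicCube, Set.mem_Ico, Set.mem_iInter]
  rw [h]
  exact MeasurableSet.iInter fun i => (measurable_coord i) measurableSet_Ico

private lemma measurable_lpConv {n : ℕ} (φ₀ Φ : SchwartzMap (EuclideanSpace ℝ (Fin n)) ℂ)
    {f : EuclideanSpace ℝ (Fin n) → ℂ} (hf : Measurable f) (ℓ : ℕ) :
    Measurable (lpConvFamily φ₀ Φ f ℓ) := by
  have hker : Continuous (lpFamily φ₀ Φ ℓ) := by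
    unfold lpFamily
    split_ifs
    · exact Φ.continuous
    · exact continuous_const.mul (φ₀.continuous.comp (continuous_const_smul _))
  have hjoint : StronglyMeasurable fun z :
      EuclideanSpace ℝ (Fin n) × EuclideanSpace ℝ (Fin n) =>
      lpFamily φ₀ Φ ℓ z.2 * f (z.1 - z.2) :=
    ((hker.measurable.comp measurable_snd).mul
      (hf.comp (measurable_fst.sub measurable_snd))).stronglyMeasurable
  have hint : StronglyMeasurable fun x : EuclideanSpace ℝ (Fin n) =>
      ∫ y, lpFamily φ₀ Φ ℓ y * f (x - y) :=
    hjoint.integral_prod_right'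
  exact hint.measurable.nnnorm.coe_nnreal_ennreal

private lemma varNormR_congr_ae {n : ℕ} {p : EuclideanSpace ℝ (Fin n) → ℝ}
    {f g : EuclideanSpace ℝ (Fin n) → ℝ≥0∞} (h : f =ᵐ[volume] g) :
    varNormR p f = varNormR p g := by
  unfold varNormR
  congr 1
  ext lam
  have hmod : varModularR p (fun x => f x / lam) = varModularR p (fun x => g x / lam) :=
    lintegral_congr_ae (h.mono fun x hx => by simp only [hx])
  simp only [Set.mem_setOf_eq, hmod]

private lemma wrapA {n : ℕ} (p q s : EuclideanSpace ℝ (Fin n) → ℝ)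
    (hp : Measurable p) (hq : Measurable q) (hs : Measurable s)
    (εp εq M : ℝ) (hεp : 0 < εp) (hεq : 0 < εq) (hM : 1 ≤ M)
    (hae : ∀ᵐ x : EuclideanSpace ℝ (Fin n), εp ≤ p x ∧ εq ≤ q x ∧ p x ≤ M ∧ q x ≤ M)
    (φ : EuclideanSpace ℝ (Fin n) → ℝ → ℝ)
    (u : ℕ → EuclideanSpace ℝ (Fin n) → ℝ≥0∞) (hu : ∀ m, Measurable (u m)) :
    tlNormFam p q s φ u
      ≤ (2:ℝ≥0∞) ^ ((M/(min εp εq * εp) : ℝ)) *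
          besovNormFam p (fun x => min (p x) (q x)) s φ u := by
  unfold tlNormFam
  refine iSup₂_le fun J K => ?_
  set A : ℕ → EuclideanSpace ℝ (Fin n) → ℝ≥0∞ := fun m =>
    Set.indicator (dyadicCube J K) (fun x =>
      ENNReal.ofReal ((2 : ℝ) ^ ((((max J 0).toNat + m : ℕ) : ℝ) * s x)) *
        u ((max J 0).toNat + m) x) with hAdef
  have hA : ∀ m, Measurable (A m) := fun m =>
    (((measurable_const.pow (hs.const_mul _)).ennreal_ofReal).mul
      (hu _)).indicator (measurableSet_dyadicCube J K)
  have htl : Set.indicator (dyadicCube J K)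
      (fun x => (∑' m : ℕ, (ENNReal.ofReal
          ((2 : ℝ) ^ ((((max J 0).toNat + m : ℕ) : ℝ) * s x)) *
          u ((max J 0).toNat + m) x) ^ q x) ^ (1/q x))
      =ᵐ[volume] fun x => (∑' m, A m x ^ q x) ^ (1/q x) := by
    filter_upwards [hae] with x hx
    have hqpos : 0 < q x := lt_of_lt_of_le hεq hx.2.1
    by_cases hxP : x ∈ dyadicCube J K
    · rw [Set.indicator_of_mem hxP]
      have hmem : ∀ m : ℕ, A m x = ENNReal.ofReal
          ((2 : ℝ) ^ ((((max J 0).toNat + m : ℕ) : ℝ) * s x)) *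
          u ((max J 0).toNat + m) x := fun m => by
        rw [hAdef]
        exact Set.indicator_of_mem hxP _
      have hsum : (∑' m, A m x ^ q x) = ∑' m : ℕ, (ENNReal.ofReal
          ((2 : ℝ) ^ ((((max J 0).toNat + m : ℕ) : ℝ) * s x)) *
          u ((max J 0).toNat + m) x) ^ q x :=
        tsum_congr fun m => by rw [hmem m]
      rw [hsum]
    · rw [Set.indicator_of_notMem hxP]
      have hz : ∀ m : ℕ, A m x ^ q x = 0 := fun m => by
        have hz0 : A m x = 0 := by
          rw [hAdef]
          exact Set.indicator_of_notMem hxP _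
        rw [hz0]
        exact ENNReal.zero_rpow_of_pos hqpos
      rw [tsum_congr hz, tsum_zero, ENNReal.zero_rpow_of_pos (one_div_pos.mpr hqpos)]
  have hcore := coreA p q hp hq εp εq M hεp hεq hM hae A hA
  calc (ENNReal.ofReal (weightOn φ J K))⁻¹ * varNormR p (Set.indicator (dyadicCube J K)
        (fun x => (∑' m : ℕ, (ENNReal.ofReal
          ((2 : ℝ) ^ ((((max J 0).toNat + m : ℕ) : ℝ) * s x)) *
          u ((max J 0).toNat + m) x) ^ q x) ^ (1/q x)))
      = (ENNReal.ofReal (weightOn φ J K))⁻¹ *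
          varNormR p (fun x => (∑' m, A m x ^ q x) ^ (1/q x)) := by
        rw [varNormR_congr_ae htl]
    _ ≤ (ENNReal.ofReal (weightOn φ J K))⁻¹ *
          ((2:ℝ≥0∞) ^ ((M/(min εp εq * εp) : ℝ)) *
            mixedNormR p (fun x => min (p x) (q x)) A) := mul_le_mul_right hcore _
    _ = (2:ℝ≥0∞) ^ ((M/(min εp εq * εp) : ℝ)) *
          ((ENNReal.ofReal (weightOn φ J K))⁻¹ *
            mixedNormR p (fun x => min (p x) (q x)) A) := by ring
    _ ≤ (2:ℝ≥0∞) ^ ((M/(min εp εq * εp) : ℝ)) *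
          besovNormFam p (fun x => min (p x) (q x)) s φ u := by
        refine mul_le_mul_right ?_ _
        unfold besovNormFam
        exact le_iSup₂ (f := fun (J : ℤ) (K : Fin n → ℤ) =>
          (ENNReal.ofReal (weightOn φ J K))⁻¹ *
            mixedNormR p (fun x => min (p x) (q x)) (fun m =>
              Set.indicator (dyadicCube J K) (fun x =>
                ENNReal.ofReal ((2 : ℝ) ^ ((((max J 0).toNat + m : ℕ) : ℝ) * s x)) *
                  u ((max J 0).toNat + m) x))) J K

private lemma wrapB {n : ℕ} (p q s : EuclideanSpace ℝ (Fin n) → ℝ)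
    (hp : Measurable p) (hq : Measurable q) (hs : Measurable s)
    (εp εq M : ℝ) (hεp : 0 < εp) (hεq : 0 < εq) (hM : 1 ≤ M)
    (hae : ∀ᵐ x : EuclideanSpace ℝ (Fin n), εp ≤ p x ∧ εq ≤ q x ∧ p x ≤ M ∧ q x ≤ M)
    (φ : EuclideanSpace ℝ (Fin n) → ℝ → ℝ)
    (u : ℕ → EuclideanSpace ℝ (Fin n) → ℝ≥0∞) (hu : ∀ m, Measurable (u m)) :
    besovNormFam p (fun x => max (p x) (q x)) s φ u
      ≤ (2:ℝ≥0∞) ^ ((M/εp : ℝ)) * tlNormFam p q s φ u := by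
  unfold besovNormFam
  refine iSup₂_le fun J K => ?_
  set A : ℕ → EuclideanSpace ℝ (Fin n) → ℝ≥0∞ := fun m =>
    Set.indicator (dyadicCube J K) (fun x =>
      ENNReal.ofReal ((2 : ℝ) ^ ((((max J 0).toNat + m : ℕ) : ℝ) * s x)) *
        u ((max J 0).toNat + m) x) with hAdef
  have hA : ∀ m, Measurable (A m) := fun m =>
    (((measurable_const.pow (hs.const_mul _)).ennreal_ofReal).mul
      (hu _)).indicator (measurableSet_dyadicCube J K)
  have htl : Set.indicator (dyadicCube J K)
      (fun x => (∑' m : ℕ, (ENNReal.ofReal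
          ((2 : ℝ) ^ ((((max J 0).toNat + m : ℕ) : ℝ) * s x)) *
          u ((max J 0).toNat + m) x) ^ q x) ^ (1/q x))
      =ᵐ[volume] fun x => (∑' m, A m x ^ q x) ^ (1/q x) := by
    filter_upwards [hae] with x hx
    have hqpos : 0 < q x := lt_of_lt_of_le hεq hx.2.1
    by_cases hxP : x ∈ dyadicCube J K
    · rw [Set.indicator_of_mem hxP]
      have hmem : ∀ m : ℕ, A m x = ENNReal.ofReal
          ((2 : ℝ) ^ ((((max J 0).toNat + m : ℕ) : ℝ) * s x)) *
          u ((max J 0).toNat + m) x := fun m => by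
        rw [hAdef]
        exact Set.indicator_of_mem hxP _
      have hsum : (∑' m, A m x ^ q x) = ∑' m : ℕ, (ENNReal.ofReal
          ((2 : ℝ) ^ ((((max J 0).toNat + m : ℕ) : ℝ) * s x)) *
          u ((max J 0).toNat + m) x) ^ q x :=
        tsum_congr fun m => by rw [hmem m]
      rw [hsum]
    · rw [Set.indicator_of_notMem hxP]
      have hz : ∀ m : ℕ, A m x ^ q x = 0 := fun m => by
        have hz0 : A m x = 0 := by
          rw [hAdef]
          exact Set.indicator_of_notMem hxP _
        rw [hz0]
        exact ENNReal.zero_rpow_of_pos hqpos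
      rw [tsum_congr hz, tsum_zero, ENNReal.zero_rpow_of_pos (one_div_pos.mpr hqpos)]
  have hcore := coreB p q hp hq εp εq M hεp hεq hM hae A hA
  calc (ENNReal.ofReal (weightOn φ J K))⁻¹ *
        mixedNormR p (fun x => max (p x) (q x)) A
      ≤ (ENNReal.ofReal (weightOn φ J K))⁻¹ *
          ((2:ℝ≥0∞) ^ ((M/εp : ℝ)) *
            varNormR p (fun x => (∑' m, A m x ^ q x) ^ (1/q x))) :=
        mul_le_mul_right hcore _
    _ = (2:ℝ≥0∞) ^ ((M/εp : ℝ)) *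
          ((ENNReal.ofReal (weightOn φ J K))⁻¹ *
            varNormR p (Set.indicator (dyadicCube J K)
              (fun x => (∑' m : ℕ, (ENNReal.ofReal
                ((2 : ℝ) ^ ((((max J 0).toNat + m : ℕ) : ℝ) * s x)) *
                u ((max J 0).toNat + m) x) ^ q x) ^ (1/q x)))) := by
        rw [varNormR_congr_ae htl]
        ring
    _ ≤ (2:ℝ≥0∞) ^ ((M/εp : ℝ)) * tlNormFam p q s φ u := by
        refine mul_le_mul_right ?_ _
        unfold tlNormFam
        exact le_iSup₂ (f := fun (J : ℤ) (K : Fin n → ℤ) =>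
          (ENNReal.ofReal (weightOn φ J K))⁻¹ *
            varNormR p (Set.indicator (dyadicCube J K)
              (fun x => (∑' m : ℕ, (ENNReal.ofReal
                ((2 : ℝ) ^ ((((max J 0).toNat + m : ℕ) : ℝ) * s x)) *
                u ((max J 0).toNat + m) x) ^ q x) ^ (1/q x)))) J K
/-- With `p₊ < ∞` and `q₊ < ∞`:
`B^{s(·),φ}_{p(·),min{p,q}(·)} ↪ F^{s(·),φ}_{p(·),q(·)} ↪ B^{s(·),φ}_{p(·),max{p,q}(·)}`;
in particular `B^{s(·),φ}_{p(·),p(·)} = F^{s(·),φ}_{p(·),p(·)}` with equivalent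
quasi-norms. -/
theorem besov_tl_embeddings {n : ℕ}
    (p q s : EuclideanSpace ℝ (Fin n) → ℝ)
    (hp_meas : Measurable p) (hq_meas : Measurable q) (hs_meas : Measurable s)
    (hp_log : GlobLogHolder p) (hq_log : GlobLogHolder q)
    (hp_minus : 0 < essInf p (volume : Measure (EuclideanSpace ℝ (Fin n))))
    (hq_minus : 0 < essInf q (volume : Measure (EuclideanSpace ℝ (Fin n))))
    (hp_plus : ∃ M : ℝ, ∀ x, p x ≤ M) (hq_plus : ∃ M : ℝ, ∀ x, q x ≤ M)
    (hs_log : ∃ C : ℝ, 0 < C ∧ LocLogHolderWith C s)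
    (hs_bdd : ∃ M : ℝ, ∀ x, |s x| ≤ M)
    (φ : EuclideanSpace ℝ (Fin n) → ℝ → ℝ) (c₁ c₂ : ℝ) (hφ : IsGWeight φ c₁ c₂)
    (φ₀ Φ : SchwartzMap (EuclideanSpace ℝ (Fin n)) ℂ) (hadm : AdmissiblePair φ₀ Φ) :
    ∃ C : ℝ, 0 < C ∧ ∀ f : EuclideanSpace ℝ (Fin n) → ℂ, Measurable f →
      (tlNormFam p q s φ (lpConvFamily φ₀ Φ f)
          ≤ ENNReal.ofReal C *
            besovNormFam p (fun x => min (p x) (q x)) s φ (lpConvFamily φ₀ Φ f)) ∧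
      (besovNormFam p (fun x => max (p x) (q x)) s φ (lpConvFamily φ₀ Φ f)
          ≤ ENNReal.ofReal C * tlNormFam p q s φ (lpConvFamily φ₀ Φ f)) ∧
      (besovNormFam p p s φ (lpConvFamily φ₀ Φ f)
          ≤ ENNReal.ofReal C * tlNormFam p p s φ (lpConvFamily φ₀ Φ f)) ∧
      (tlNormFam p p s φ (lpConvFamily φ₀ Φ f)
          ≤ ENNReal.ofReal C * besovNormFam p p s φ (lpConvFamily φ₀ Φ f)) := by

  classical
  obtain ⟨hp_loc, Cpi, hCpi, pinf, hpinf⟩ := hp_log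
  obtain ⟨hq_loc, Cqi, hCqi, qinf, hqinf⟩ := hq_log
  obtain ⟨Mp, hMp⟩ := hp_plus
  obtain ⟨Mq, hMq⟩ := hq_plus
  have hlogge : ∀ x : EuclideanSpace ℝ (Fin n), (1:ℝ) ≤ Real.log (Real.exp 1 + ‖x‖) := by
    intro x
    have h1 : Real.exp 1 ≤ Real.exp 1 + ‖x‖ := le_add_of_nonneg_right (norm_nonneg x)
    calc (1:ℝ) = Real.log (Real.exp 1) := (Real.log_exp 1).symm
      _ ≤ _ := Real.log_le_log (Real.exp_pos 1) h1
  have hp_lb : ∀ x : EuclideanSpace ℝ (Fin n), pinf - Cpi ≤ p x := by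
    intro x
    have h2 : |p x - pinf| ≤ Cpi := le_trans (hpinf x) (div_le_self hCpi.le (hlogge x))
    linarith [(abs_le.mp h2).1]
  have hq_lb : ∀ x : EuclideanSpace ℝ (Fin n), qinf - Cqi ≤ q x := by
    intro x
    have h2 : |q x - qinf| ≤ Cqi := le_trans (hqinf x) (div_le_self hCqi.le (hlogge x))
    linarith [(abs_le.mp h2).1]
  have hbp : Filter.IsBoundedUnder (· ≥ ·) (MeasureTheory.ae volume) p :=
    Filter.isBoundedUnder_of ⟨pinf - Cpi, fun x => hp_lb x⟩
  have hbq : Filter.IsBoundedUnder (· ≥ ·) (MeasureTheory.ae volume) q :=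
    Filter.isBoundedUnder_of ⟨qinf - Cqi, fun x => hq_lb x⟩
  have haep : ∀ᵐ x : EuclideanSpace ℝ (Fin n),
      essInf p volume / 2 < p x :=
    Filter.eventually_lt_of_lt_liminf (half_lt_self hp_minus) hbp
  have haeq : ∀ᵐ x : EuclideanSpace ℝ (Fin n),
      essInf q volume / 2 < q x :=
    Filter.eventually_lt_of_lt_liminf (half_lt_self hq_minus) hbq
  set εp : ℝ := min 1 (essInf p volume / 2) with hεpdef
  set εq : ℝ := min 1 (essInf q volume / 2) with hεqdef
  set M : ℝ := max 1 (max Mp Mq) with hMdef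
  have hεp : 0 < εp := lt_min one_pos (half_pos hp_minus)
  have hεq : 0 < εq := lt_min one_pos (half_pos hq_minus)
  have hεp1 : εp ≤ 1 := min_le_left _ _
  have hεr1 : min εp εq ≤ 1 := le_trans (min_le_left _ _) hεp1
  have hεr : 0 < min εp εq := lt_min hεp hεq
  have hM : 1 ≤ M := le_max_left _ _
  have hM0 : (0:ℝ) < M := lt_of_lt_of_le one_pos hM
  have hpM : ∀ x, p x ≤ M := fun x =>
    le_trans (hMp x) (le_trans (le_max_left Mp Mq) (le_max_right 1 _))
  have hqM : ∀ x, q x ≤ M := fun x =>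
    le_trans (hMq x) (le_trans (le_max_right Mp Mq) (le_max_right 1 _))
  have hae : ∀ᵐ x : EuclideanSpace ℝ (Fin n),
      εp ≤ p x ∧ εq ≤ q x ∧ p x ≤ M ∧ q x ≤ M := by
    filter_upwards [haep, haeq] with x h1 h2
    exact ⟨le_trans (min_le_right _ _) h1.le, le_trans (min_le_right _ _) h2.le,
      hpM x, hqM x⟩
  have haepp : ∀ᵐ x : EuclideanSpace ℝ (Fin n),
      εp ≤ p x ∧ εp ≤ p x ∧ p x ≤ M ∧ p x ≤ M := by
    filter_upwards [haep] with x h1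
    exact ⟨le_trans (min_le_right _ _) h1.le, le_trans (min_le_right _ _) h1.le,
      hpM x, hpM x⟩
  refine ⟨(2:ℝ) ^ ((M/(min εp εq * εp) : ℝ)), Real.rpow_pos_of_pos two_pos _, fun f hf => ?_⟩
  have hu : ∀ m, Measurable (lpConvFamily φ₀ Φ f m) := measurable_lpConv φ₀ Φ hf
  have hofReal : ENNReal.ofReal ((2:ℝ) ^ ((M/(min εp εq * εp) : ℝ)))
      = (2:ℝ≥0∞) ^ ((M/(min εp εq * εp) : ℝ)) := by
    rw [← ENNReal.ofReal_rpow_of_pos two_pos]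
    norm_num
  have hEpos : 0 < min εp εq * εp := mul_pos hεr hεp
  have hconst1 : (2:ℝ≥0∞) ^ ((M/εp : ℝ)) ≤ (2:ℝ≥0∞) ^ ((M/(min εp εq * εp) : ℝ)) := by
    refine ENNReal.rpow_le_rpow_of_exponent_le one_le_two ?_
    rw [div_le_div_iff₀ hεp hEpos]
    have h3 : min εp εq * εp ≤ εp := mul_le_of_le_one_left hεp.le hεr1
    exact mul_le_mul_of_nonneg_left h3 hM0.le
  have hconst2 : (2:ℝ≥0∞) ^ ((M/(εp * εp) : ℝ)) ≤ (2:ℝ≥0∞) ^ ((M/(min εp εq * εp) : ℝ)) := by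
    refine ENNReal.rpow_le_rpow_of_exponent_le one_le_two ?_
    rw [div_le_div_iff₀ (mul_pos hεp hεp) hEpos]
    have h3 : min εp εq ≤ εp := min_le_left _ _
    exact mul_le_mul_of_nonneg_left (mul_le_mul_of_nonneg_right h3 hεp.le) hM0.le
  refine ⟨?_, ?_, ?_, ?_⟩
  · rw [hofReal]
    exact wrapA p q s hp_meas hq_meas hs_meas εp εq M hεp hεq hM hae φ _ hu
  · rw [hofReal]
    exact le_trans (wrapB p q s hp_meas hq_meas hs_meas εp εq M hεp hεq hM hae φ _ hu)
      (mul_le_mul_left hconst1 _)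
  · rw [hofReal]
    have hB := wrapB p p s hp_meas hp_meas hs_meas εp εp M hεp hεp hM haepp φ _ hu
    simp only [max_self] at hB
    exact le_trans hB (mul_le_mul_left hconst1 _)
  · rw [hofReal]
    have hA := wrapA p p s hp_meas hp_meas hs_meas εp εp M hεp hεp hM haepp φ _ hu
    simp only [min_self] at hA
    exact le_trans hA (mul_le_mul_left hconst2 _)
end
end
end

section
/- Let φ ∈ 𝒢(ℝⁿ×[0,∞)), p ∈ C^{log}(ℝⁿ), s, s₀, s₁ ∈ C^{log}_loc(ℝⁿ) ∩ L^∞(ℝⁿ), and q₀, q₁ ∈ C^{log}(ℝⁿ). (i) If q₀(x) ≤ q₁(x) for all x, then B^{s(·),φ}_{p(·),q₀(·)}(ℝⁿ) ↪ B^{s(·),φ}_{p(·),q₁(·)}(ℝⁿ). (ii) If ess inf (s₀ − s₁) > 0, then B^{s₀(·),φ}_{p(·),q₀(·)}(ℝⁿ) ↪ B^{s₁(·),φ}_{p(·),q₁(·)}(ℝⁿ). -/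
open MeasureTheory Real FourierTransform
open scoped ENNReal BigOperators Classical

noncomputable section

/-! ### Auxiliary lemmas for the embedding theorem -/

section BesovEmbedAux

variable {n : ℕ}

local notation "𝕍" => (volume : Measure (EuclideanSpace ℝ (Fin n)))

lemma ennreal_div_div (a b c : ℝ≥0∞) (hb : b ≠ 0) (hc0 : c ≠ 0) :
    a / b / c = a / (b * c) := by
  rw [div_eq_mul_inv, div_eq_mul_inv, div_eq_mul_inv,
    ENNReal.mul_inv (Or.inl hb) (Or.inr hc0), mul_assoc]

lemma ennreal_mul_div_le {θ y D D' : ℝ≥0∞} (hθ0 : θ ≠ 0) (hθt : θ ≠ ⊤)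
    (h : θ * D' ≤ D) : θ * y / D ≤ y / D' := by
  calc θ * y / D ≤ θ * y / (θ * D') := ENNReal.div_le_div_left h _
    _ = y / D' := ENNReal.mul_div_mul_left _ _ hθ0 hθt

lemma modular_mono (p : EuclideanSpace ℝ (Fin n) → ℝ)
    {f g : EuclideanSpace ℝ (Fin n) → ℝ≥0∞}
    (hp : ∀ᵐ x ∂𝕍, 0 ≤ p x) (hfg : ∀ᵐ x ∂𝕍, f x ≤ g x) :
    varModularR p f ≤ varModularR p g :=
  lintegral_mono_ae <| (hp.and hfg).mono fun _ hx => ENNReal.rpow_le_rpow hx.2 hx.1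

/-- The defining set of the inner infimum. -/
def innerSet (p q : EuclideanSpace ℝ (Fin n) → ℝ)
    (g : EuclideanSpace ℝ (Fin n) → ℝ≥0∞) : Set ℝ≥0∞ :=
  {mu : ℝ≥0∞ | 0 < mu ∧ varModularR p (fun x => g x / mu ^ (1 / q x)) ≤ 1}

lemma mixedInnerR_eq (p q : EuclideanSpace ℝ (Fin n) → ℝ)
    (g : EuclideanSpace ℝ (Fin n) → ℝ≥0∞) :
    mixedInnerR p q g = sInf (innerSet p q g) := rfl

lemma innerSet_upward {p q : EuclideanSpace ℝ (Fin n) → ℝ}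
    (hpq : ∀ᵐ x ∂𝕍, 0 ≤ p x ∧ 0 < q x)
    {g : EuclideanSpace ℝ (Fin n) → ℝ≥0∞} {mu mu' : ℝ≥0∞}
    (h : mu ∈ innerSet p q g) (hle : mu ≤ mu') : mu' ∈ innerSet p q g := by
  refine ⟨h.1.trans_le hle, le_trans (modular_mono p (hpq.mono fun x hx => hx.1)
    (hpq.mono fun x hx => ?_)) h.2⟩
  exact ENNReal.div_le_div_left
    (ENNReal.rpow_le_rpow hle (le_of_lt (one_div_pos.mpr hx.2))) _

lemma mem_innerSet_of_lt {p q : EuclideanSpace ℝ (Fin n) → ℝ}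
    (hpq : ∀ᵐ x ∂𝕍, 0 ≤ p x ∧ 0 < q x)
    {g : EuclideanSpace ℝ (Fin n) → ℝ≥0∞} {t : ℝ≥0∞}
    (ht : mixedInnerR p q g < t) : t ∈ innerSet p q g := by
  rw [mixedInnerR_eq] at ht
  obtain ⟨m, hm, hmt⟩ := sInf_lt_iff.mp ht
  exact innerSet_upward hpq hm hmt.le

lemma le_mul_sInf_s17 {c A : ℝ≥0∞} (hc : c ≠ 0) (hc' : c ≠ ⊤) {S : Set ℝ≥0∞}
    (h : ∀ lam ∈ S, A ≤ c * lam) : A ≤ c * sInf S := by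
  rw [sInf_eq_iInf' S, ENNReal.mul_iInf_of_ne hc hc']
  exact le_iInf fun a => h a a.2

/-- Core comparison for part (i): the inner infimum decreases when the exponent
increases, provided the original inner infimum is at most `1`. -/
lemma inner_le_inner {p q₀ q₁ : EuclideanSpace ℝ (Fin n) → ℝ} {a B : ℝ}
    (ha : 0 < a) (haB : a ≤ B)
    (hae : ∀ᵐ x ∂𝕍, 0 ≤ p x ∧ a ≤ q₀ x ∧ q₀ x ≤ q₁ x ∧ q₁ x ≤ B)
    (h : EuclideanSpace ℝ (Fin n) → ℝ≥0∞) (h1 : mixedInnerR p q₀ h ≤ 1) :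
    mixedInnerR p q₁ h ≤ mixedInnerR p q₀ h := by
  have hB : 0 < B := ha.trans_le haB
  have hpq₀ : ∀ᵐ x ∂𝕍, 0 ≤ p x ∧ 0 < q₀ x :=
    hae.mono fun x hx => ⟨hx.1, ha.trans_le hx.2.1⟩
  -- Step 3 : `mixedInnerR p q₁ h ≤ 1`.
  have key : ∀ c : ℝ, 1 < c →
      mixedInnerR p q₁ h ≤ ENNReal.ofReal (c ^ (B / a)) := by
    intro c hc
    have hc0 : (0:ℝ) < c := lt_trans one_pos hc
    have ht1 : (1:ℝ≥0∞) < ENNReal.ofReal c := ENNReal.one_lt_ofReal.mpr hc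
    have htS₀ : ENNReal.ofReal c ∈ innerSet p q₀ h :=
      mem_innerSet_of_lt hpq₀ (h1.trans_lt ht1)
    have htne : ENNReal.ofReal c ≠ ⊤ := ENNReal.ofReal_ne_top
    rw [← ENNReal.ofReal_rpow_of_pos hc0, mixedInnerR_eq]
    refine sInf_le ⟨ENNReal.rpow_pos (lt_trans one_pos ht1) htne, ?_⟩
    refine le_trans (modular_mono p (hae.mono fun x hx => hx.1)
      (hae.mono fun x hx => ?_)) htS₀.2
    have hq0 : 0 < q₀ x := ha.trans_le hx.2.1
    have hq1 : 0 < q₁ x := hq0.trans_le hx.2.2.1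
    refine ENNReal.div_le_div_left ?_ _
    rw [← ENNReal.rpow_mul]
    refine ENNReal.rpow_le_rpow_of_exponent_le ht1.le ?_
    rw [div_mul_div_comm, mul_one, div_le_div_iff₀ hq0 (by positivity)]
    have := mul_le_mul hx.2.1 hx.2.2.2 hq1.le (ha.le.trans hx.2.1)
    linarith
  have h3 : mixedInnerR p q₁ h ≤ 1 := by
    by_contra h'
    push_neg at h'
    obtain ⟨r, hr0, h1r, hrb⟩ := ENNReal.lt_iff_exists_real_btwn.mp h'
    have hr1 : (1:ℝ) < r := ENNReal.one_lt_ofReal.mp h1r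
    have hc1 : (1:ℝ) < r ^ (a / B) :=
      (Real.one_lt_rpow_iff_of_pos (lt_trans one_pos hr1)).mpr
        (Or.inl ⟨hr1, div_pos ha hB⟩)
    have := key _ hc1
    rw [← Real.rpow_mul hr0, show a / B * (B / a) = 1 by field_simp,
      Real.rpow_one] at this
    exact absurd (this.trans_lt hrb) (lt_irrefl _)
  rcases lt_or_eq_of_le h1 with hμ | hμ
  · by_contra h'
    push_neg at h'
    obtain ⟨t, hμt, htlt⟩ := exists_between h'
    have ht1 : min t 1 ≤ 1 := min_le_right _ _
    have hμt' : mixedInnerR p q₀ h < min t 1 := lt_min hμt hμ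
    have htS₀ : min t 1 ∈ innerSet p q₀ h := mem_innerSet_of_lt hpq₀ hμt'
    have htS₁ : min t 1 ∈ innerSet p q₁ h := by
      refine ⟨htS₀.1, le_trans (modular_mono p (hae.mono fun x hx => hx.1)
        (hae.mono fun x hx => ?_)) htS₀.2⟩
      have hq0 : 0 < q₀ x := ha.trans_le hx.2.1
      refine ENNReal.div_le_div_left ?_ _
      exact ENNReal.rpow_le_rpow_of_exponent_ge ht1
        (one_div_le_one_div_of_le hq0 hx.2.2.1)
    have : mixedInnerR p q₁ h ≤ min t 1 := by
      rw [mixedInnerR_eq]; exact sInf_le htS₁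
    exact absurd ((this.trans (min_le_left _ _)).trans_lt htlt) (lt_irrefl _)
  · rw [hμ]; exact h3

/-- Part (i) at the level of the mixed norm. -/
lemma mixedNorm_le_of_le {p q₀ q₁ : EuclideanSpace ℝ (Fin n) → ℝ} {a B : ℝ}
    (ha : 0 < a) (haB : a ≤ B)
    (hae : ∀ᵐ x ∂𝕍, 0 ≤ p x ∧ a ≤ q₀ x ∧ q₀ x ≤ q₁ x ∧ q₁ x ≤ B)
    (g : ℕ → EuclideanSpace ℝ (Fin n) → ℝ≥0∞) :
    mixedNormR p q₁ g ≤ mixedNormR p q₀ g := by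
  apply sInf_le_sInf
  rintro lam ⟨hpos, hmod⟩
  refine ⟨hpos, ?_⟩
  refine le_trans (ENNReal.tsum_le_tsum fun v => ?_) hmod
  exact inner_le_inner ha haB hae _ ((ENNReal.le_tsum v).trans hmod)

/-- Part (ii) at the level of the mixed norm. -/
lemma mixedNorm_le_smoothness {p q₀ q₁ : EuclideanSpace ℝ (Fin n) → ℝ} {a ε : ℝ}
    (ha : 0 < a) (hε : 0 < ε)
    (hae : ∀ᵐ x ∂𝕍, 0 ≤ p x ∧ a ≤ q₀ x ∧ a ≤ q₁ x)
    (g g' : ℕ → EuclideanSpace ℝ (Fin n) → ℝ≥0∞)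
    (hgg : ∀ m x, g' m x ≤ ENNReal.ofReal ((2:ℝ) ^ (-(m:ℝ) * ε)) * g m x) :
    mixedNormR p q₁ g' ≤
      ENNReal.ofReal ((2:ℝ) ^ (1/a) * (1 - (2:ℝ) ^ (-(ε * a))) ^ (-(1/a))) *
        mixedNormR p q₀ g := by
  set r : ℝ := (2:ℝ) ^ (-(ε * a)) with hr_def
  have hr0 : 0 < r := Real.rpow_pos_of_pos two_pos _
  have hr1 : r < 1 :=
    Real.rpow_lt_one_of_one_lt_of_neg one_lt_two (by nlinarith)
  set κ : ℝ := 1 - r with hκ_def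
  have hκ0 : 0 < κ := by simp only [hκ_def]; linarith
  have hκ1 : κ ≤ 1 := by simp only [hκ_def]; linarith
  set C : ℝ := (2:ℝ) ^ (1/a) * κ ^ (-(1/a)) with hC_def
  have hC : 0 < C := by positivity
  have hpq₀ : ∀ᵐ x ∂𝕍, 0 ≤ p x ∧ 0 < q₀ x :=
    hae.mono fun x hx => ⟨hx.1, ha.trans_le hx.2.1⟩
  refine le_mul_sInf_s17 (by simp [hC]) ENNReal.ofReal_ne_top ?_
  rintro lam ⟨hlam, hmod⟩
  set Λ : ℝ≥0∞ := ENNReal.ofReal C * lam with hΛ_def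
  have hΛ0 : Λ ≠ 0 := (ENNReal.mul_pos (by simp [hC]) hlam.ne').ne'
  apply sInf_le
  refine ⟨ENNReal.mul_pos (by simp [hC]) hlam.ne', ?_⟩
  -- bound each inner infimum by `ofReal (κ * r ^ m)`
  have key : ∀ m : ℕ, mixedInnerR p q₁ (fun x => g' m x / Λ) ≤
      ENNReal.ofReal (κ * r ^ m) := by
    intro m
    have hμpos : (0:ℝ) < κ * r ^ m := by positivity
    have hμle1 : κ * r ^ m ≤ 1 :=
      mul_le_one₀ hκ1 (by positivity) (pow_le_one₀ hr0.le hr1.le)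
    -- `2 ∈ innerSet p q₀ (g m · / lam)`
    have h2mem : (2:ℝ≥0∞) ∈ innerSet p q₀ (fun x => g m x / lam) :=
      mem_innerSet_of_lt hpq₀
        (lt_of_le_of_lt ((ENNReal.le_tsum m).trans hmod) ENNReal.one_lt_two)
    rw [mixedInnerR_eq]
    refine sInf_le ⟨ENNReal.ofReal_pos.mpr hμpos, ?_⟩
    refine le_trans (modular_mono p (hae.mono fun x hx => hx.1)
      (hae.mono fun x hx => ?_)) h2mem.2
    obtain ⟨hpx, hq0x, hq1x⟩ := hx
    have hq0pos : 0 < q₀ x := ha.trans_le hq0x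
    have hq1pos : 0 < q₁ x := ha.trans_le hq1x
    have hμrne : ENNReal.ofReal (κ * r ^ m) ^ (1 / q₁ x) ≠ 0 :=
      (ENNReal.rpow_pos (ENNReal.ofReal_pos.mpr hμpos) ENNReal.ofReal_ne_top).ne'
    have h2ne : ((2:ℝ≥0∞)) ^ (1 / q₀ x) ≠ 0 :=
      (ENNReal.rpow_pos two_pos ENNReal.ofNat_ne_top).ne'
    rw [ennreal_div_div _ _ _ hΛ0 hμrne, ennreal_div_div _ _ _ hlam.ne' h2ne]
    refine le_trans (ENNReal.div_le_div_right (hgg m x) _) ?_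
    refine ennreal_mul_div_le (by positivity) ENNReal.ofReal_ne_top ?_
    -- `θ_m * (lam * 2^{1/q₀x}) ≤ Λ * μ^{1/q₁x}`
    rw [hΛ_def, show ENNReal.ofReal ((2:ℝ) ^ (-(m:ℝ) * ε)) * (lam * (2:ℝ≥0∞) ^ (1 / q₀ x))
        = lam * (ENNReal.ofReal ((2:ℝ) ^ (-(m:ℝ) * ε)) * (2:ℝ≥0∞) ^ (1 / q₀ x)) by ring,
      show ENNReal.ofReal C * lam * ENNReal.ofReal (κ * r ^ m) ^ (1 / q₁ x)
        = lam * (ENNReal.ofReal C * ENNReal.ofReal (κ * r ^ m) ^ (1 / q₁ x)) by ring]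
    refine mul_le_mul_right ?_ lam
    have h2eq : ((2:ℝ≥0∞)) ^ (1 / q₀ x) = ENNReal.ofReal ((2:ℝ) ^ (1 / q₀ x)) := by
      rw [← ENNReal.ofReal_rpow_of_pos two_pos]; norm_num
    rw [h2eq, ← ENNReal.ofReal_mul (by positivity),
      ENNReal.ofReal_rpow_of_pos hμpos, ← ENNReal.ofReal_mul hC.le]
    refine ENNReal.ofReal_le_ofReal ?_
    -- real inequality
    have e1 : (κ * r ^ m) ^ (1/a) ≤ (κ * r ^ m) ^ (1 / q₁ x) :=
      Real.rpow_le_rpow_of_exponent_ge hμpos hμle1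
        (one_div_le_one_div_of_le ha hq1x)
    have e2 : (κ * r ^ m) ^ (1/a) = κ ^ (1/a) * (2:ℝ) ^ (-(m:ℝ) * ε) := by
      rw [Real.mul_rpow hκ0.le (by positivity)]
      congr 1
      rw [hr_def, ← Real.rpow_natCast ((2:ℝ) ^ (-(ε * a))) m,
        ← Real.rpow_mul (by positivity), ← Real.rpow_mul (by positivity)]
      congr 1
      field_simp
    have e3 : C * (κ ^ (1/a) * (2:ℝ) ^ (-(m:ℝ) * ε))
        = (2:ℝ) ^ (1/a) * (2:ℝ) ^ (-(m:ℝ) * ε) := by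
      rw [hC_def]
      have : κ ^ (-(1/a)) * κ ^ (1/a) = 1 := by
        rw [← Real.rpow_add hκ0]; norm_num
      calc (2:ℝ) ^ (1/a) * κ ^ (-(1/a)) * (κ ^ (1/a) * (2:ℝ) ^ (-(m:ℝ) * ε))
          = (2:ℝ) ^ (1/a) * (κ ^ (-(1/a)) * κ ^ (1/a)) * (2:ℝ) ^ (-(m:ℝ) * ε) := by ring
        _ = _ := by rw [this]; ring
    have e4 : (2:ℝ) ^ (1 / q₀ x) ≤ (2:ℝ) ^ (1/a) :=
      Real.rpow_le_rpow_of_exponent_le one_le_two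
        (one_div_le_one_div_of_le ha hq0x)
    calc (2:ℝ) ^ (-(m:ℝ) * ε) * (2:ℝ) ^ (1 / q₀ x)
        ≤ (2:ℝ) ^ (-(m:ℝ) * ε) * (2:ℝ) ^ (1/a) := by
          exact mul_le_mul_of_nonneg_left e4 (by positivity)
      _ = C * (κ ^ (1/a) * (2:ℝ) ^ (-(m:ℝ) * ε)) := by rw [e3]; ring
      _ ≤ C * (κ * r ^ m) ^ (1 / q₁ x) := by
          rw [← e2]; exact mul_le_mul_of_nonneg_left e1 hC.le
  -- sum the geometric series
  calc mixedModularR p q₁ (fun v x => g' v x / Λ)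
      ≤ ∑' m : ℕ, ENNReal.ofReal (κ * r ^ m) := ENNReal.tsum_le_tsum key
    _ = ENNReal.ofReal κ * ∑' m : ℕ, (ENNReal.ofReal r) ^ m := by
        rw [← ENNReal.tsum_mul_left]
        congr 1; funext m
        rw [← ENNReal.ofReal_pow hr0.le, ← ENNReal.ofReal_mul hκ0.le]
    _ = ENNReal.ofReal κ * (1 - ENNReal.ofReal r)⁻¹ := by
        rw [ENNReal.tsum_geometric]
    _ = 1 := by
        rw [show (1:ℝ≥0∞) - ENNReal.ofReal r = ENNReal.ofReal κ by
          rw [hκ_def, ENNReal.ofReal_sub 1 hr0.le, ENNReal.ofReal_one]]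
        exact ENNReal.mul_inv_cancel (by simp [hκ0]) ENNReal.ofReal_ne_top

lemma bddAbove_of_glob {g : EuclideanSpace ℝ (Fin n) → ℝ} (hg : GlobLogHolder g) :
    ∃ Blo Bhi : ℝ, ∀ x, Blo ≤ g x ∧ g x ≤ Bhi := by
  obtain ⟨-, C, hC, ginf, h⟩ := hg
  refine ⟨ginf - C, ginf + C, fun x => ?_⟩
  have hlog : (1:ℝ) ≤ Real.log (Real.exp 1 + ‖x‖) := by
    calc (1:ℝ) = Real.log (Real.exp 1) := (Real.log_exp 1).symm
      _ ≤ _ := by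
        apply Real.log_le_log (Real.exp_pos 1)
        linarith [norm_nonneg x]
  have h1 := (abs_le.mp (h x)).1
  have h2 := (abs_le.mp (h x)).2
  have h3 : C / Real.log (Real.exp 1 + ‖x‖) ≤ C := div_le_self hC.le hlog
  have h4 : 0 < C / Real.log (Real.exp 1 + ‖x‖) := by positivity
  constructor <;> linarith

lemma ae_lt_of_lt_essInf' {g : EuclideanSpace ℝ (Fin n) → ℝ}
    (hbdd : ∃ Blo Bhi : ℝ, ∀ x, Blo ≤ g x ∧ g x ≤ Bhi) {c : ℝ}
    (hc : c < essInf g 𝕍) : ∀ᵐ x ∂𝕍, c < g x := by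
  obtain ⟨Blo, Bhi, hB⟩ := hbdd
  exact Filter.eventually_lt_of_lt_liminf hc
    (Filter.isBoundedUnder_of ⟨Blo, fun x => (hB x).1⟩)

end BesovEmbedAux

/-- (i) If `q₀ ≤ q₁` pointwise then
`B^{s(·),φ}_{p(·),q₀(·)} ↪ B^{s(·),φ}_{p(·),q₁(·)}`.
(ii) If `ess inf (s₀ − s₁) > 0` then
`B^{s₀(·),φ}_{p(·),q₀(·)} ↪ B^{s₁(·),φ}_{p(·),q₁(·)}`. -/
theorem besov_basic_embeddings {n : ℕ}
    (p q₀ q₁ s s₀ s₁ : EuclideanSpace ℝ (Fin n) → ℝ)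
    (hp_meas : Measurable p) (hq₀_meas : Measurable q₀) (hq₁_meas : Measurable q₁)
    (hs_meas : Measurable s) (hs₀_meas : Measurable s₀) (hs₁_meas : Measurable s₁)
    (hp_log : GlobLogHolder p) (hq₀_log : GlobLogHolder q₀) (hq₁_log : GlobLogHolder q₁)
    (hp_minus : 0 < essInf p (volume : Measure (EuclideanSpace ℝ (Fin n))))
    (hq₀_minus : 0 < essInf q₀ (volume : Measure (EuclideanSpace ℝ (Fin n))))
    (hq₁_minus : 0 < essInf q₁ (volume : Measure (EuclideanSpace ℝ (Fin n))))
    (hs_log : ∃ C : ℝ, 0 < C ∧ LocLogHolderWith C s)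
    (hs₀_log : ∃ C : ℝ, 0 < C ∧ LocLogHolderWith C s₀)
    (hs₁_log : ∃ C : ℝ, 0 < C ∧ LocLogHolderWith C s₁)
    (hs_bdd : ∃ M : ℝ, ∀ x, |s x| ≤ M)
    (hs₀_bdd : ∃ M : ℝ, ∀ x, |s₀ x| ≤ M) (hs₁_bdd : ∃ M : ℝ, ∀ x, |s₁ x| ≤ M)
    (φ : EuclideanSpace ℝ (Fin n) → ℝ → ℝ) (c₁ c₂ : ℝ) (hφ : IsGWeight φ c₁ c₂)
    (φ₀ Φ : SchwartzMap (EuclideanSpace ℝ (Fin n)) ℂ) (hadm : AdmissiblePair φ₀ Φ) :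
    -- (i)
    ((∀ x, q₀ x ≤ q₁ x) →
      ∃ C : ℝ, 0 < C ∧ ∀ f : EuclideanSpace ℝ (Fin n) → ℂ, Measurable f →
        besovNormFam p q₁ s φ (lpConvFamily φ₀ Φ f)
          ≤ ENNReal.ofReal C * besovNormFam p q₀ s φ (lpConvFamily φ₀ Φ f)) ∧
    -- (ii)
    ((∃ ε : ℝ, 0 < ε ∧ ∀ x, ε ≤ s₀ x - s₁ x) →
      ∃ C : ℝ, 0 < C ∧ ∀ f : EuclideanSpace ℝ (Fin n) → ℂ, Measurable f →
        besovNormFam p q₁ s₁ φ (lpConvFamily φ₀ Φ f)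
          ≤ ENNReal.ofReal C * besovNormFam p q₀ s₀ φ (lpConvFamily φ₀ Φ f)) := by
  classical
  have hpae : ∀ᵐ x ∂(volume : Measure (EuclideanSpace ℝ (Fin n))), 0 ≤ p x :=
    (ae_lt_of_lt_essInf' (bddAbove_of_glob hp_log) hp_minus).mono fun x hx => hx.le
  constructor
  · -- part (i)
    intro hq
    refine ⟨1, one_pos, fun f hf => ?_⟩
    rw [ENNReal.ofReal_one, one_mul]
    obtain ⟨Blo₁, B₁, hB₁⟩ := bddAbove_of_glob hq₁_log
    set a : ℝ := essInf q₀ (volume : Measure (EuclideanSpace ℝ (Fin n))) / 2 with ha_def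
    have ha : 0 < a := half_pos hq₀_minus
    have haq₀ : ∀ᵐ x ∂(volume : Measure (EuclideanSpace ℝ (Fin n))), a ≤ q₀ x :=
      (ae_lt_of_lt_essInf' (bddAbove_of_glob hq₀_log)
        (half_lt_self hq₀_minus)).mono fun x hx => hx.le
    have hae : ∀ᵐ x ∂(volume : Measure (EuclideanSpace ℝ (Fin n))),
        0 ≤ p x ∧ a ≤ q₀ x ∧ q₀ x ≤ q₁ x ∧ q₁ x ≤ max B₁ a :=
      (hpae.and haq₀).mono fun x hx =>
        ⟨hx.1, hx.2, hq x, ((hB₁ x).2).trans (le_max_left _ _)⟩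
    unfold besovNormFam
    refine iSup_mono fun J => iSup_mono fun K => mul_le_mul_right ?_ _
    exact mixedNorm_le_of_le ha (le_max_right _ _) hae _
  · -- part (ii)
    rintro ⟨ε, hε, hs⟩
    set a : ℝ := min (essInf q₀ (volume : Measure (EuclideanSpace ℝ (Fin n))))
      (essInf q₁ (volume : Measure (EuclideanSpace ℝ (Fin n)))) / 2 with ha_def
    have ha : 0 < a := half_pos (lt_min hq₀_minus hq₁_minus)
    have haq₀ : ∀ᵐ x ∂(volume : Measure (EuclideanSpace ℝ (Fin n))), a ≤ q₀ x :=
      (ae_lt_of_lt_essInf' (bddAbove_of_glob hq₀_log)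
        (lt_of_lt_of_le (half_lt_self (lt_min hq₀_minus hq₁_minus))
          (min_le_left _ _))).mono fun x hx => hx.le
    have haq₁ : ∀ᵐ x ∂(volume : Measure (EuclideanSpace ℝ (Fin n))), a ≤ q₁ x :=
      (ae_lt_of_lt_essInf' (bddAbove_of_glob hq₁_log)
        (lt_of_lt_of_le (half_lt_self (lt_min hq₀_minus hq₁_minus))
          (min_le_right _ _))).mono fun x hx => hx.le
    have hae : ∀ᵐ x ∂(volume : Measure (EuclideanSpace ℝ (Fin n))),
        0 ≤ p x ∧ a ≤ q₀ x ∧ a ≤ q₁ x :=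
      (hpae.and (haq₀.and haq₁)).mono fun x hx => ⟨hx.1, hx.2.1, hx.2.2⟩
    have hκ0 : 0 < 1 - (2:ℝ) ^ (-(ε * a)) := by
      have := Real.rpow_lt_one_of_one_lt_of_neg one_lt_two
        (show -(ε * a) < 0 by nlinarith)
      linarith
    refine ⟨(2:ℝ) ^ (1/a) * (1 - (2:ℝ) ^ (-(ε * a))) ^ (-(1/a)), by positivity,
      fun f hf => ?_⟩
    unfold besovNormFam
    refine iSup₂_le fun J K => ?_
    have hgg : ∀ (m : ℕ) (x : EuclideanSpace ℝ (Fin n)),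
        Set.indicator (dyadicCube J K) (fun x =>
          ENNReal.ofReal ((2 : ℝ) ^ ((((max J 0).toNat + m : ℕ) : ℝ) * s₁ x)) *
            lpConvFamily φ₀ Φ f ((max J 0).toNat + m) x) x ≤
          ENNReal.ofReal ((2:ℝ) ^ (-(m:ℝ) * ε)) *
          Set.indicator (dyadicCube J K) (fun x =>
            ENNReal.ofReal ((2 : ℝ) ^ ((((max J 0).toNat + m : ℕ) : ℝ) * s₀ x)) *
              lpConvFamily φ₀ Φ f ((max J 0).toNat + m) x) x := by
      intro m x
      by_cases hx : x ∈ dyadicCube J K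
      · rw [Set.indicator_of_mem hx, Set.indicator_of_mem hx, ← mul_assoc]
        refine mul_le_mul_left ?_ _
        rw [← ENNReal.ofReal_mul (by positivity), ← Real.rpow_add two_pos]
        refine ENNReal.ofReal_le_ofReal
          (Real.rpow_le_rpow_of_exponent_le one_le_two ?_)
        have hj : (m:ℝ) ≤ ((((max J 0).toNat + m : ℕ)) : ℝ) := by
          push_cast
          linarith [(Nat.cast_nonneg (α := ℝ) ((max J 0).toNat))]
        have hj0 : (0:ℝ) ≤ ((((max J 0).toNat + m : ℕ)) : ℝ) :=
          le_trans (Nat.cast_nonneg (α := ℝ) m) hj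
        have hsx := hs x
        nlinarith [mul_le_mul_of_nonneg_left hsx hj0,
          mul_le_mul_of_nonneg_right hj hε.le]
      · simp [Set.indicator_of_notMem hx]
    have percube := mixedNorm_le_smoothness ha hε hae
      (fun m => Set.indicator (dyadicCube J K) (fun x =>
        ENNReal.ofReal ((2 : ℝ) ^ ((((max J 0).toNat + m : ℕ) : ℝ) * s₀ x)) *
          lpConvFamily φ₀ Φ f ((max J 0).toNat + m) x))
      (fun m => Set.indicator (dyadicCube J K) (fun x =>
        ENNReal.ofReal ((2 : ℝ) ^ ((((max J 0).toNat + m : ℕ) : ℝ) * s₁ x)) *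
          lpConvFamily φ₀ Φ f ((max J 0).toNat + m) x)) hgg
    calc (ENNReal.ofReal (weightOn φ J K))⁻¹ *
        mixedNormR p q₁ (fun m => Set.indicator (dyadicCube J K) (fun x =>
          ENNReal.ofReal ((2 : ℝ) ^ ((((max J 0).toNat + m : ℕ) : ℝ) * s₁ x)) *
            lpConvFamily φ₀ Φ f ((max J 0).toNat + m) x))
        ≤ (ENNReal.ofReal (weightOn φ J K))⁻¹ *
          (ENNReal.ofReal ((2:ℝ) ^ (1/a) * (1 - (2:ℝ) ^ (-(ε * a))) ^ (-(1/a))) *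
          mixedNormR p q₀ (fun m => Set.indicator (dyadicCube J K) (fun x =>
            ENNReal.ofReal ((2 : ℝ) ^ ((((max J 0).toNat + m : ℕ) : ℝ) * s₀ x)) *
              lpConvFamily φ₀ Φ f ((max J 0).toNat + m) x))) :=
          mul_le_mul_right percube _
      _ = ENNReal.ofReal ((2:ℝ) ^ (1/a) * (1 - (2:ℝ) ^ (-(ε * a))) ^ (-(1/a))) *
          ((ENNReal.ofReal (weightOn φ J K))⁻¹ *
          mixedNormR p q₀ (fun m => Set.indicator (dyadicCube J K) (fun x =>
            ENNReal.ofReal ((2 : ℝ) ^ ((((max J 0).toNat + m : ℕ) : ℝ) * s₀ x)) *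
              lpConvFamily φ₀ Φ f ((max J 0).toNat + m) x))) := by ring
      _ ≤ _ := mul_le_mul_right
          (le_iSup₂ (f := fun (J' : ℤ) (K' : Fin n → ℤ) =>
            (ENNReal.ofReal (weightOn φ J' K'))⁻¹ *
              mixedNormR p q₀ (fun m => Set.indicator (dyadicCube J' K') (fun x =>
                ENNReal.ofReal ((2 : ℝ) ^ ((((max J' 0).toNat + m : ℕ) : ℝ) * s₀ x)) *
                  lpConvFamily φ₀ Φ f ((max J' 0).toNat + m) x))) J K) _
end
end
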